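/- arXiv:2405.19717 — 5 statements merged into one kernel-verified Lean document; each statement's English description precedes it below -/
import Mathlib

section
/- crx_2(K_{2,n}) = 2n for every n ≥ 2; equivalently, the only 2-rainbow cycle colouring of K_{2,n} is the rainbow colouring of all its edges. -/
open SimpleGraph

/-- `G.CycleThrough S`: there is a cycle in `G` containing all vertices of `S`. -/
def SimpleGraph.CycleThrough {V : Type*} (G : SimpleGraph V) (S : Set V) : Prop :=
  ∃ (u : V) (c : G.Walk u u), c.IsCycle ∧ ∀ v ∈ S, v ∈ c.support

/-- A `k`-rainbow cycle colouring: every `k`-set of vertices lies in a cycle whose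
edges receive pairwise distinct colours. -/
def SimpleGraph.IsRainbowCycleColoring {V : Type*} (G : SimpleGraph V) (k : ℕ)
    (φ : Sym2 V → ℕ) : Prop :=
  ∀ S : Finset V, S.card = k →
    ∃ (u : V) (c : G.Walk u u), c.IsCycle ∧ (∀ v ∈ S, v ∈ c.support) ∧
      (c.edges.map φ).Nodup

/-- The `k`-rainbow cycle index `crx_k(G)`. -/
noncomputable def SimpleGraph.crx {V : Type*} (G : SimpleGraph V) (k : ℕ) : ℕ :=
  sInf {r | ∃ φ : Sym2 V → ℕ, (∀ e ∈ G.edgeSet, φ e < r) ∧ G.IsRainbowCycleColoring k φ}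

/-- Number of edges of `G`. -/
noncomputable def SimpleGraph.numEdges {V : Type*} (G : SimpleGraph V) : ℕ :=
  Nat.card G.edgeSet

/-- A graph is 2-connected if it has more than 2 vertices and deleting any vertex
leaves it connected. -/
def SimpleGraph.IsTwoConnected {V : Type*} (G : SimpleGraph V) : Prop :=
  2 < Nat.card V ∧ ∀ v : V, (G.induce {w | w ≠ v}).Connected

/-- A graph is Hamiltonian if it has a cycle through all its vertices. -/
def SimpleGraph.IsHamiltonianGraph {V : Type*} (G : SimpleGraph V) : Prop :=
  ∃ (u : V) (c : G.Walk u u), c.IsCycle ∧ ∀ v : V, v ∈ c.support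

section Aux

variable {n : ℕ}

private lemma K2n_adj_right {b : Fin n} {x : Fin 2 ⊕ Fin n}
    (h : (completeBipartiteGraph (Fin 2) (Fin n)).Adj (Sum.inr b) x) :
    ∃ a : Fin 2, x = Sum.inl a := by
  cases x with
  | inl a => exact ⟨a, rfl⟩
  | inr b' => simp [completeBipartiteGraph_adj] at h

/-- Any cycle through `inr b` contains both edges at `inr b`. -/
private lemma edges_at_right {u : Fin 2 ⊕ Fin n}
    {c : (completeBipartiteGraph (Fin 2) (Fin n)).Walk u u} (hc : c.IsCycle)
    {b : Fin n} (hb : Sum.inr b ∈ c.support) (a : Fin 2) :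
    s(Sum.inl a, Sum.inr b) ∈ c.edges := by
  have hrot := hc.rotate hb
  have hperm := (c.rotate_edges _ hb).perm
  set c' := c.rotate _ hb with hc'
  obtain ⟨x, hx, p, hp⟩ := (Walk.not_nil_iff).mp hrot.not_nil
  obtain ⟨a1, rfl⟩ := K2n_adj_right hx
  rw [hp, Walk.cons_isCycle_iff] at hrot
  have hpnil : ¬ p.Nil := Walk.not_nil_of_ne (by simp)
  have hrnil : ¬ p.reverse.Nil := Walk.not_nil_of_ne (by simp)
  obtain ⟨y, hy, q, hq⟩ := (Walk.not_nil_iff).mp hrnil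
  obtain ⟨a2, rfl⟩ := K2n_adj_right hy
  have hlast : s(Sum.inr b, Sum.inl a2) ∈ p.edges := by
    have : s(Sum.inr b, Sum.inl a2) ∈ p.reverse.edges := by
      rw [hq]; simp
    rwa [Walk.edges_reverse, List.mem_reverse] at this
  have hne : a1 ≠ a2 := by
    rintro rfl
    exact hrot.2 hlast
  have h1 : s(Sum.inr b, Sum.inl a1) ∈ c'.edges := by rw [hp]; simp
  have h2 : s(Sum.inr b, Sum.inl a2) ∈ c'.edges := by rw [hp]; simp [hlast]
  have ha : a = a1 ∨ a = a2 := by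
    fin_cases a <;> fin_cases a1 <;> fin_cases a2 <;> simp_all
  rw [← hperm.mem_iff, Sym2.eq_swap]
  rcases ha with rfl | rfl
  · exact h1
  · exact h2

private lemma fourCycle (φ : Sym2 (Fin 2 ⊕ Fin n) → ℕ)
    (hφ : ∀ a b, φ s(Sum.inl a, Sum.inr b) = 2 * b.val + a.val)
    {i j : Fin n} (hij : i ≠ j) :
    ∃ (u : Fin 2 ⊕ Fin n) (c : (completeBipartiteGraph (Fin 2) (Fin n)).Walk u u),
      c.IsCycle ∧
      (Sum.inl (0 : Fin 2) ∈ c.support ∧ Sum.inl (1 : Fin 2) ∈ c.support ∧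
        Sum.inr i ∈ c.support ∧ Sum.inr j ∈ c.support) ∧
      (c.edges.map φ).Nodup := by
  have h1 : (completeBipartiteGraph (Fin 2) (Fin n)).Adj (Sum.inl 0) (Sum.inr i) := by simp
  have h2 : (completeBipartiteGraph (Fin 2) (Fin n)).Adj (Sum.inr i) (Sum.inl 1) := by simp
  have h3 : (completeBipartiteGraph (Fin 2) (Fin n)).Adj (Sum.inl 1) (Sum.inr j) := by simp
  have h4 : (completeBipartiteGraph (Fin 2) (Fin n)).Adj (Sum.inr j) (Sum.inl 0) := by simp
  refine ⟨Sum.inl 0, .cons h1 (.cons h2 (.cons h3 (.cons h4 .nil))), ?_, ?_, ?_⟩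
  · rw [Walk.cons_isCycle_iff]
    constructor
    · rw [Walk.isPath_def]
      simp [Sym2.eq_iff, hij, hij.symm, Fin.ext_iff]
    · simp [Sym2.eq_iff, hij, hij.symm, Fin.ext_iff]
  · simp
  · have hvij : i.val ≠ j.val := fun h => hij (Fin.ext h)
    simp only [Walk.edges_cons, Walk.edges_nil, List.map_cons, List.map_nil]
    have e1 : φ s(Sum.inl 0, Sum.inr i) = 2 * i.val := by rw [hφ]; simp
    have e2 : φ s(Sum.inr i, Sum.inl 1) = 2 * i.val + 1 := by rw [Sym2.eq_swap, hφ]; simp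
    have e3 : φ s(Sum.inl 1, Sum.inr j) = 2 * j.val + 1 := by rw [hφ]; simp
    have e4 : φ s(Sum.inr j, Sum.inl 0) = 2 * j.val := by rw [Sym2.eq_swap, hφ]; simp
    rw [e1, e2, e3, e4]
    simp only [List.nodup_cons, List.mem_cons, List.mem_singleton, List.not_mem_nil,
      List.nodup_nil, or_false, and_true]
    push_neg
    exact ⟨⟨by omega, by omega, by omega⟩, ⟨by omega, by omega⟩, by omega, trivial⟩

end Aux

/-- crx_2(K_{2,n}) = 2n for n ≥ 2. -/
theorem crx_two_completeBipartite_two (n : ℕ) (hn : 2 ≤ n) :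
    (completeBipartiteGraph (Fin 2) (Fin n)).crx 2 = 2 * n := by
  rw [SimpleGraph.crx]
  set G := completeBipartiteGraph (Fin 2) (Fin n) with hG
  -- the colouring
  set f : Fin 2 ⊕ Fin n → Fin 2 ⊕ Fin n → ℕ := fun u v =>
    match u, v with
    | .inl a, .inr b => 2 * b.val + a.val
    | .inr b, .inl a => 2 * b.val + a.val
    | _, _ => 0 with hf
  have hfsymm : ∀ u v, f u v = f v u := by
    rintro (a | b) (a' | b') <;> rfl
  set φ : Sym2 (Fin 2 ⊕ Fin n) → ℕ := Sym2.lift ⟨f, hfsymm⟩ with hφdef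
  have hφ : ∀ a b, φ s(Sum.inl a, Sum.inr b) = 2 * b.val + a.val := fun a b => rfl
  have hmem : 2 * n ∈ {r | ∃ φ : Sym2 (Fin 2 ⊕ Fin n) → ℕ,
      (∀ e ∈ G.edgeSet, φ e < r) ∧ G.IsRainbowCycleColoring 2 φ} := by
    refine ⟨φ, ?_, ?_⟩
    · intro e he
      induction e with
      | h u v =>
        rw [mem_edgeSet] at he
        rcases u with a | b
        · rcases v with a' | b'
          · exact absurd he (by simp [hG])
          · have := a.isLt; have := b'.isLt
            rw [hφ]; omega
        · rcases v with a' | b'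
          · have := a'.isLt; have := b.isLt
            rw [Sym2.eq_swap, hφ]; omega
          · exact absurd he (by simp [hG])
    · intro S hS
      obtain ⟨u, v, huv, rfl⟩ := Finset.card_eq_two.mp hS
      have hn1 : 1 < Fintype.card (Fin n) := by simp only [Fintype.card_fin]; omega
      -- choose i j distinct covering the right vertices of {u, v}
      have key : ∀ i j : Fin n, i ≠ j → u ∈ ({Sum.inl 0, Sum.inl 1, Sum.inr i, Sum.inr j} :
          Set (Fin 2 ⊕ Fin n)) → v ∈ ({Sum.inl 0, Sum.inl 1, Sum.inr i, Sum.inr j} :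
          Set (Fin 2 ⊕ Fin n)) →
          ∃ (w : Fin 2 ⊕ Fin n) (c : G.Walk w w), c.IsCycle ∧
            (∀ x ∈ ({u, v} : Finset (Fin 2 ⊕ Fin n)), x ∈ c.support) ∧
            (c.edges.map φ).Nodup := by
        intro i j hij hu hv
        obtain ⟨w, c, hcyc, ⟨s0, s1, si, sj⟩, hnd⟩ := fourCycle φ hφ hij
        refine ⟨w, c, hcyc, ?_, hnd⟩
        intro x hx
        simp only [Finset.mem_insert, Finset.mem_singleton] at hx
        rcases hx with rfl | rfl
        · rcases hu with rfl | rfl | rfl | rfl <;> assumption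
        · rcases hv with rfl | rfl | rfl | rfl <;> assumption
      rcases u with a | b <;> rcases v with a' | b'
      · obtain ⟨j, hj⟩ := Fintype.exists_ne_of_one_lt_card hn1 ⟨0, by omega⟩
        refine key ⟨0, by omega⟩ j hj.symm ?_ ?_
        · fin_cases a <;> simp
        · fin_cases a' <;> simp
      · obtain ⟨j, hj⟩ := Fintype.exists_ne_of_one_lt_card hn1 b'
        refine key b' j hj.symm ?_ ?_
        · fin_cases a <;> simp
        · simp
      · obtain ⟨j, hj⟩ := Fintype.exists_ne_of_one_lt_card hn1 b
        refine key b j hj.symm ?_ ?_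
        · simp
        · fin_cases a' <;> simp
      · have hbb : b ≠ b' := fun h => huv (by rw [h])
        refine key b b' hbb ?_ ?_ <;> simp
  apply le_antisymm
  · exact Nat.sInf_le hmem
  · -- lower bound
    have hne : {r | ∃ φ : Sym2 (Fin 2 ⊕ Fin n) → ℕ,
        (∀ e ∈ G.edgeSet, φ e < r) ∧ G.IsRainbowCycleColoring 2 φ}.Nonempty := ⟨_, hmem⟩
    obtain ⟨ψ, hlt, hrb⟩ := Nat.sInf_mem hne
    set r := sInf {r | ∃ φ : Sym2 (Fin 2 ⊕ Fin n) → ℕ,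
        (∀ e ∈ G.edgeSet, φ e < r) ∧ G.IsRainbowCycleColoring 2 φ} with hr
    -- ψ is injective on the edges
    have hinj : ∀ a a' : Fin 2, ∀ b b' : Fin n, (a, b) ≠ (a', b') →
        ψ s(Sum.inl a, Sum.inr b) ≠ ψ s(Sum.inl a', Sum.inr b') := by
      intro a a' b b' hne' heq
      by_cases hbb : b = b'
      · subst hbb
        have haa : a ≠ a' := fun h => hne' (by rw [h])
        have hn1 : 1 < Fintype.card (Fin n) := by
          rw [Fintype.card_fin]; exact lt_of_lt_of_le one_lt_two hn
        obtain ⟨b2, hb2⟩ := Fintype.exists_ne_of_one_lt_card hn1 b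
        obtain ⟨w, c, hcyc, hsup, hnd⟩ := hrb {Sum.inr b, Sum.inr b2}
          (Finset.card_pair (by simpa using hb2.symm))
        have hb : Sum.inr b ∈ c.support := hsup _ (by simp)
        have e1 := edges_at_right hcyc hb a
        have e2 := edges_at_right hcyc hb a'
        have h5 := List.inj_on_of_nodup_map hnd e1 e2 heq
        rw [Sym2.eq_iff] at h5
        rcases h5 with ⟨h5, _⟩ | ⟨h5, _⟩
        · exact haa (Sum.inl.inj h5)
        · exact (Sum.inl_ne_inr h5).elim
      · obtain ⟨w, c, hcyc, hsup, hnd⟩ := hrb {Sum.inr b, Sum.inr b'}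
          (Finset.card_pair (by simpa using hbb))
        have e1 := edges_at_right hcyc (hsup (Sum.inr b) (by simp)) a
        have e2 := edges_at_right hcyc (hsup (Sum.inr b') (by simp)) a'
        have h5 := List.inj_on_of_nodup_map hnd e1 e2 heq
        rw [Sym2.eq_iff] at h5
        rcases h5 with ⟨_, h5⟩ | ⟨h5, _⟩
        · exact hbb (Sum.inr.inj h5)
        · exact (Sum.inl_ne_inr h5).elim
    have hedge : ∀ (a : Fin 2) (b : Fin n), s(Sum.inl a, Sum.inr b) ∈ G.edgeSet := by
      intro a b; rw [mem_edgeSet, hG]; simp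
    set g : Fin 2 × Fin n → Fin r := fun p =>
      ⟨ψ s(Sum.inl p.1, Sum.inr p.2), hlt _ (hedge p.1 p.2)⟩ with hg
    have hginj : Function.Injective g := by
      intro p q hpq
      by_contra hne'
      exact hinj p.1 q.1 p.2 q.2 (by simpa [Prod.ext_iff] using hne')
        (by simpa [hg, Fin.ext_iff] using hpq)
    have := Fintype.card_le_of_injective g hginj
    simpa using this
end

section
/- For k ≥ 2 and n ≥ k, we have ⌈n/(k−1)⌉ ≤ crx_k(K_{k,n}) ≤ kn. -/
open SimpleGraph

open List Sum

variable {k n : ℕ}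

private abbrev KB (k n : ℕ) := completeBipartiteGraph (Fin k) (Fin n)


lemma alt_count : ∀ (l : List Bool) (b : Bool),
    List.Chain' (· ≠ ·) (b :: l) → (b :: l).getLast? = some b →
    l.count true = l.count false
  | [], _, _, _ => rfl
  | [x], b, hc, hl => by
      simp [List.Chain', List.isChain_cons_cons] at hc
      simp [List.getLast?] at hl
      simp [hl] at hc
  | x :: y :: t, b, hc, hl => by
      rw [List.Chain', List.isChain_cons_cons] at hc
      obtain ⟨hbx, hc⟩ := hc
      rw [List.isChain_cons_cons] at hc
      obtain ⟨hxy, hc⟩ := hc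
      have hx : x = !b := by revert hbx; cases b <;> cases x <;> simp
      have hy : y = b := by subst hx; revert hxy; cases b <;> cases y <;> simp
      have hl' : (b :: t).getLast? = some b := by
        rw [List.getLast?_cons_cons, List.getLast?_cons_cons] at hl
        cases t with
        | nil => simp
        | cons a s => simpa [List.getLast?_cons_cons] using hl
      have ih := alt_count t b (hy ▸ hc) hl'
      subst hx; subst hy
      cases y <;> simp [List.count_cons, ih]

variable {k n : ℕ}


-- the coloring
private def bcol (n : ℕ) : (Fin k ⊕ Fin n) → (Fin k ⊕ Fin n) → ℕ
  | inl i, inr j => i * n + j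
  | inr j, inl i => i * n + j
  | _, _ => 0

private def φcol (k n : ℕ) : Sym2 (Fin k ⊕ Fin n) → ℕ :=
  Sym2.lift ⟨bcol n, by intro u v; cases u <;> cases v <;> rfl⟩

lemma φcol_mk (i : Fin k) (j : Fin n) : φcol k n s(inl i, inr j) = i * n + j := rfl
lemma φcol_mk' (i : Fin k) (j : Fin n) : φcol k n s(inr j, inl i) = i * n + j := rfl

lemma KB_edge_char (e : Sym2 (Fin k ⊕ Fin n)) (he : e ∈ (KB k n).edgeSet) :
    ∃ (i : Fin k) (j : Fin n), e = s(inl i, inr j) := by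
  induction e with
  | _ u v =>
    rw [mem_edgeSet] at he
    rcases u with i | j <;> rcases v with i' | j'
    · simp at he
    · exact ⟨i, j', rfl⟩
    · exact ⟨i', j, Sym2.eq_swap⟩
    · simp at he

lemma KB_adj_lr (i : Fin k) (j : Fin n) : (KB k n).Adj (inl i) (inr j) := by simp
lemma KB_adj_rl (j : Fin n) (i : Fin k) : (KB k n).Adj (inr j) (inl i) := by simp

/-- zig-zag path from `inl ⟨k-1-m⟩` to `inr (f ⟨k-1⟩)`. -/
def zig (f : Fin k → Fin n) : (m : ℕ) → (hm : m < k) →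
    (KB k n).Walk (inl ⟨k-1-m, by omega⟩) (inr (f ⟨k-1, by omega⟩))
  | 0, hm => Walk.cons (KB_adj_lr ⟨k-1, by omega⟩ _) Walk.nil
  | (m+1), hm =>
      Walk.cons (KB_adj_lr ⟨k-1-(m+1), by omega⟩ (f ⟨k-1-(m+1), by omega⟩))
        (Walk.cons (KB_adj_rl (f ⟨k-1-(m+1), by omega⟩) ⟨k-1-m, by omega⟩)
          (zig f m (by omega)))

lemma zig_support (f : Fin k → Fin n) : ∀ (m : ℕ) (hm : m < k) (v : Fin k ⊕ Fin n),
    v ∈ (zig f m hm).support ↔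
      ∃ i : Fin k, k-1-m ≤ i.val ∧ (v = inl i ∨ v = inr (f i))
  | 0, hm, v => by
      simp only [zig, Walk.support_cons, Walk.support_nil]
      constructor
      · rintro h
        simp at h
        exact ⟨⟨k-1, by omega⟩, by simpa using h⟩
      · rintro ⟨i, hi, h⟩
        have : i = ⟨k-1, by omega⟩ := by ext; simp; omega
        rcases h with h | h <;> simp [h, this] <;> congr 1 <;> omega
  | (m+1), hm, v => by
      simp only [zig, Walk.support_cons, List.mem_cons]
      rw [zig_support f m (by omega)]
      constructor
      · rintro (h | h | h)
        · exact ⟨⟨k-1-(m+1), by omega⟩, by simp [h]⟩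
        · exact ⟨⟨k-1-(m+1), by omega⟩, by simp [h]⟩
        · obtain ⟨i, hi, h⟩ := h
          exact ⟨i, by omega, h⟩
      · rintro ⟨i, hi, h | h⟩
        · rcases Nat.eq_or_lt_of_le hi with he | hlt
          · left; subst h; congr 1; ext; simp [← he]
          · right; right; exact ⟨i, by omega, Or.inl h⟩
        · rcases Nat.eq_or_lt_of_le hi with he | hlt
          · right; left; subst h; congr 2; ext; simp [← he]
          · right; right; exact ⟨i, by omega, Or.inr h⟩

lemma zig_isPath (f : Fin k → Fin n) (hf : Function.Injective f) :
    ∀ (m : ℕ) (hm : m < k), (zig f m hm).IsPath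
  | 0, hm => by
      simp only [zig]
      apply Walk.IsPath.cons (Walk.IsPath.nil) (by simp)
  | (m+1), hm => by
      simp only [zig]
      have hp := zig_isPath f hf m (by omega)
      refine Walk.IsPath.cons (Walk.IsPath.cons hp ?_) ?_
      · rw [zig_support]
        rintro ⟨i, hi, h | h⟩
        · cases h
        · have : f ⟨k-1-(m+1), by omega⟩ = f i := by exact inr.inj h
          have := hf this
          have : k-1-(m+1) = i.val := congrArg Fin.val this
          omega
      · simp only [Walk.support_cons, List.mem_cons]
        rw [zig_support]
        rintro (h | ⟨i, hi, h | h⟩)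
        · cases h
        · have : k-1-(m+1) = i.val := congrArg Fin.val (inl.inj h)
          omega
        · cases h

lemma zig_edges (f : Fin k → Fin n) : ∀ (m : ℕ) (hm : m < k) (e : Sym2 (Fin k ⊕ Fin n)),
    e ∈ (zig f m hm).edges →
      ∃ i : Fin k, e = s(inl i, inr (f i)) ∨
        ∃ hi : i.val + 1 < k, e = s(inr (f i), inl ⟨i.val+1, hi⟩)
  | 0, hm, e => by
      simp only [zig, Walk.edges_cons, Walk.edges_nil, List.mem_singleton]
      rintro rfl
      exact ⟨⟨k-1, by omega⟩, Or.inl rfl⟩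
  | (m+1), hm, e => by
      simp only [zig, Walk.edges_cons, List.mem_cons]
      rintro (rfl | rfl | h)
      · exact ⟨⟨k-1-(m+1), by omega⟩, Or.inl rfl⟩
      · refine ⟨⟨k-1-(m+1), by omega⟩, Or.inr ⟨by simp; omega, ?_⟩⟩
        congr 2
        simp
        omega
      · exact zig_edges f m (by omega) e h

/-- the hamiltonian-ish cycle through all of `inl` and all of `inr ∘ f`. -/
def zigCycle (f : Fin k → Fin n) (hk : 2 ≤ k) :
    (KB k n).Walk (inr (f ⟨k-1, by omega⟩)) (inr (f ⟨k-1, by omega⟩)) :=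
  Walk.cons (KB_adj_rl _ ⟨0, by omega⟩)
    ((zig f (k-1) (by omega)).copy (by congr 1; apply Fin.ext; simp) rfl)

lemma zigCycle_isCycle (f : Fin k → Fin n) (hf : Function.Injective f) (hk : 2 ≤ k) :
    (zigCycle f hk).IsCycle := by
  rw [zigCycle, Walk.cons_isCycle_iff]
  refine ⟨(Walk.isPath_copy _ _ _).mpr (zig_isPath f hf (k-1) (by omega)), ?_⟩
  rw [Walk.edges_copy]
  intro h
  obtain ⟨i, h | ⟨hi, h⟩⟩ := zig_edges f (k-1) (by omega) _ h
  · rw [Sym2.eq_iff] at h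
    rcases h with ⟨h1, h2⟩ | ⟨h1, h2⟩
    · cases h1
    · have : i = (⟨0, by omega⟩ : Fin k) := inl.inj h2.symm
      have h3 : f ⟨k-1, by omega⟩ = f i := inr.inj h1
      have h4 := congrArg Fin.val (hf h3)
      rw [this] at h4
      simp at h4
      omega
  · rw [Sym2.eq_iff] at h
    rcases h with ⟨h1, h2⟩ | ⟨h1, h2⟩
    · have := congrArg Fin.val (inl.inj h2)
      simp at this
    · cases h1

lemma zigCycle_support (f : Fin k → Fin n) (hk : 2 ≤ k) (v : Fin k ⊕ Fin n) :
    (v ∈ (zigCycle f hk).support ↔ ∃ i : Fin k, v = inl i ∨ v = inr (f i)) := by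
  rw [zigCycle, Walk.support_cons, List.mem_cons, Walk.support_copy]
  rw [zig_support f (k-1) (by omega)]
  constructor
  · rintro (rfl | ⟨i, hi, h⟩)
    · exact ⟨⟨k-1, by omega⟩, Or.inr rfl⟩
    · exact ⟨i, h⟩
  · rintro ⟨i, h⟩
    exact Or.inr ⟨i, by omega, h⟩
lemma upper_mem (k n : ℕ) (hk : 2 ≤ k) (hn : k ≤ n) :
    ∃ φ : Sym2 (Fin k ⊕ Fin n) → ℕ, (∀ e ∈ (KB k n).edgeSet, φ e < k * n) ∧
      (KB k n).IsRainbowCycleColoring k φ := by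
  have hn0 : 0 < n := by omega
  refine ⟨φcol k n, ?_, ?_⟩
  · intro e he
    obtain ⟨i, j, rfl⟩ := KB_edge_char e he
    rw [φcol_mk]
    have hi : i.val ≤ k - 1 := by omega
    calc i.val * n + j.val < i.val * n + n := by omega
    _ = (i.val + 1) * n := by ring
    _ ≤ k * n := Nat.mul_le_mul_right n (by omega)
  · intro S hS
    -- the right part of S
    set R : Finset (Fin n) := S.biUnion (Sum.elim (fun _ => (∅ : Finset (Fin n))) (fun y => {y})) with hR
    have hRcard : R.card ≤ k := by
      refine le_trans (Finset.card_biUnion_le) ?_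
      have h1 : ∑ a ∈ S, (Sum.elim (fun _ => (∅ : Finset (Fin n))) (fun y => {y}) a).card
          ≤ ∑ _a ∈ S, 1 := Finset.sum_le_sum (by rintro (i | j) _ <;> simp)
      simpa [hS] using h1
    obtain ⟨R', hRR', -, hR'card⟩ :=
      Finset.exists_subsuperset_card_eq (Finset.subset_univ R) hRcard (by simpa using hn)
    set f : Fin k → Fin n := fun i => (R'.orderIsoOfFin hR'card i : Fin n) with hf
    have hfinj : Function.Injective f := fun a b hab => by
      have := (R'.orderIsoOfFin hR'card).injective (Subtype.val_injective hab)
      exact this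
    have hfsurj : ∀ y ∈ R', ∃ i, f i = y := fun y hy => by
      obtain ⟨i, hi⟩ := (R'.orderIsoOfFin hR'card).surjective ⟨y, hy⟩
      exact ⟨i, by simp only [hf, hi]⟩
    refine ⟨_, zigCycle f hk, zigCycle_isCycle f hfinj hk, ?_, ?_⟩
    · intro v hv
      rw [zigCycle_support]
      rcases v with i | y
      · exact ⟨i, Or.inl rfl⟩
      · have hyR : y ∈ R := by
          rw [hR, Finset.mem_biUnion]
          exact ⟨inr y, hv, by simp⟩
        obtain ⟨i, hi⟩ := hfsurj y (hRR' hyR)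
        exact ⟨i, Or.inr (by rw [hi])⟩
    · refine List.Nodup.map_on ?_ ((zigCycle_isCycle f hfinj hk).edges_nodup)
      intro e1 he1 e2 he2 hφ
      obtain ⟨i1, j1, rfl⟩ := KB_edge_char e1 ((zigCycle f hk).edges_subset_edgeSet he1)
      obtain ⟨i2, j2, rfl⟩ := KB_edge_char e2 ((zigCycle f hk).edges_subset_edgeSet he2)
      rw [φcol_mk, φcol_mk] at hφ
      have hj1 : j1.val < n := j1.isLt
      have hj2 : j2.val < n := j2.isLt
      have hi12 : i1.val = i2.val ∧ j1.val = j2.val := by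
        constructor
        · have h1 : (i1.val * n + j1.val) / n = i1.val := by
            rw [Nat.mul_comm, Nat.mul_add_div hn0, Nat.div_eq_of_lt hj1, Nat.add_zero]
          have h2 : (i2.val * n + j2.val) / n = i2.val := by
            rw [Nat.mul_comm, Nat.mul_add_div hn0, Nat.div_eq_of_lt hj2, Nat.add_zero]
          rw [← h1, ← h2, hφ]
        · have h1 : (i1.val * n + j1.val) % n = j1.val := by
            rw [Nat.mul_comm, Nat.mul_add_mod, Nat.mod_eq_of_lt hj1]
          have h2 : (i2.val * n + j2.val) % n = j2.val := by
            rw [Nat.mul_comm, Nat.mul_add_mod, Nat.mod_eq_of_lt hj2]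
          rw [← h1, ← h2, hφ]
      have e1 : i1 = i2 := Fin.ext hi12.1
      have e2 : j1 = j2 := Fin.ext hi12.2
      rw [e1, e2]

lemma cycle_mem_tail {V : Type*} {G : SimpleGraph V} {u : V} {c : G.Walk u u}
    (hc : c.IsCycle) {v : V} (h : v ∈ c.support) : v ∈ c.support.tail := by
  have h3 := hc.three_le_length
  have hlen : c.support.length = c.length + 1 := c.length_support
  rw [c.support_eq_cons] at h
  rcases List.mem_cons.mp h with rfl | h
  · have hlast : c.support.getLast? = some v := by
      rw [← List.head?_reverse, ← Walk.support_reverse]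
      rw [c.reverse.support_eq_cons]
      rfl
    cases htail : c.support.tail with
    | nil =>
        exfalso
        rw [c.support_eq_cons, htail] at hlen
        simp only [List.length_cons, List.length_nil] at hlen
        omega
    | cons a t =>
        rw [c.support_eq_cons, htail, List.getLast?_cons_cons] at hlast
        exact List.mem_of_mem_getLast? hlast
  · exact h

lemma KB_adj_sides {k n : ℕ} {u v : Fin k ⊕ Fin n} (h : (KB k n).Adj u v) :
    u.isLeft ≠ v.isLeft := by
  rcases u with i | j <;> rcases v with i' | j' <;> simp_all

lemma lower_core (k n r : ℕ) (hk : 2 ≤ k) (hn : k ≤ n) (φ : Sym2 (Fin k ⊕ Fin n) → ℕ)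
    (hφ : ∀ e ∈ (KB k n).edgeSet, φ e < r)
    (hrb : (KB k n).IsRainbowCycleColoring k φ) : n ≤ (k-1) * r := by
  by_contra hlt
  push_neg at hlt
  set x0 : Fin k ⊕ Fin n := inl ⟨0, by omega⟩ with hx0
  set g : Fin n → ℕ := fun j => φ s(x0, inr j) with hg
  have hmaps : ∀ j ∈ (Finset.univ : Finset (Fin n)), g j ∈ Finset.range r := by
    intro j _
    rw [Finset.mem_range]
    exact hφ _ (by rw [mem_edgeSet]; simp [hx0])
  have hmul : (Finset.range r).card * (k-1) < (Finset.univ : Finset (Fin n)).card := by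
    rw [Finset.card_range, Finset.card_univ, Fintype.card_fin, Nat.mul_comm]
    exact hlt
  obtain ⟨y, -, hy⟩ := Finset.exists_lt_card_fiber_of_mul_lt_card_of_maps_to hmaps hmul
  obtain ⟨T, hT, hTcard⟩ :=
    Finset.exists_subset_card_eq
      (show k ≤ (Finset.univ.filter fun j => g j = y).card by omega)
  set S := T.image (inr : Fin n → Fin k ⊕ Fin n) with hS
  have hScard : S.card = k := by
    rw [hS, Finset.card_image_of_injective _ inr_injective, hTcard]
  obtain ⟨u, c, hcyc, hsup, hnd⟩ := hrb S hScard
  -- alternation counting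
  have hchain : List.Chain' (· ≠ ·) (c.support.map Sum.isLeft) := by
    rw [List.Chain', List.isChain_map]
    exact (c.isChain_adj_support).imp (fun a b hab => KB_adj_sides hab)
  have hhead : c.support.map Sum.isLeft = u.isLeft :: (c.support.tail.map Sum.isLeft) := by
    conv_lhs => rw [c.support_eq_cons]
    rfl
  have hlast : (c.support.map Sum.isLeft).getLast? = some u.isLeft := by
    rw [← List.head?_reverse, ← List.map_reverse, ← Walk.support_reverse,
      c.reverse.support_eq_cons]
    rfl
  have hcount := alt_count _ _ (hhead ▸ hchain) (hhead ▸ hlast)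
  set tl := c.support.tail with htl
  have hcountL : (tl.map Sum.isLeft).count true = tl.countP (fun v => v.isLeft) := by
    rw [List.count, List.countP_map]
    apply List.countP_congr
    intro v _
    simp
  have hcountR : (tl.map Sum.isLeft).count false = tl.countP (fun v => !v.isLeft) := by
    rw [List.count, List.countP_map]
    apply List.countP_congr
    intro v _
    simp
  rw [hcountL, hcountR] at hcount
  have hnodupT : tl.Nodup := hcyc.support_nodup
  set FL := (tl.filter (fun v => v.isLeft)).toFinset with hFL
  set FR := (tl.filter (fun v => !v.isLeft)).toFinset with hFR
  have hFLcard : FL.card = tl.countP (fun v => v.isLeft) := by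
    rw [hFL, List.toFinset_card_of_nodup (hnodupT.filter _), List.countP_eq_length_filter]
  have hFRcard : FR.card = tl.countP (fun v => !v.isLeft) := by
    rw [hFR, List.toFinset_card_of_nodup (hnodupT.filter _), List.countP_eq_length_filter]
  have hFLsub : FL ⊆ Finset.univ.image (inl : Fin k → Fin k ⊕ Fin n) := by
    intro v hv
    rw [hFL, List.mem_toFinset, List.mem_filter] at hv
    rcases v with i | j
    · exact Finset.mem_image.mpr ⟨i, Finset.mem_univ i, rfl⟩
    · simp at hv
  have himcard : (Finset.univ.image (inl : Fin k → Fin k ⊕ Fin n)).card = k := by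
    rw [Finset.card_image_of_injective _ inl_injective]
    simp
  have hFLk : FL.card ≤ k := le_trans (Finset.card_le_card hFLsub) (le_of_eq himcard)
  have hSsubFR : S ⊆ FR := by
    intro v hv
    have hvtl : v ∈ tl := cycle_mem_tail hcyc (hsup v hv)
    rw [hFR, List.mem_toFinset, List.mem_filter]
    refine ⟨hvtl, ?_⟩
    obtain ⟨j, -, rfl⟩ := Finset.mem_image.mp hv
    simp
  have hFRk : k ≤ FR.card :=
    calc k = S.card := hScard.symm
    _ ≤ FR.card := Finset.card_le_card hSsubFR
  have hSFR : S = FR := Finset.eq_of_subset_of_card_le hSsubFR (by omega)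
  have hFLall : Finset.univ.image (inl : Fin k → Fin k ⊕ Fin n) = FL :=
    (Finset.eq_of_subset_of_card_le hFLsub (by omega)).symm
  have hx0tl : x0 ∈ tl := by
    have hmem : x0 ∈ FL := by
      rw [← hFLall]
      exact Finset.mem_image.mpr ⟨⟨0, by omega⟩, Finset.mem_univ _, rfl⟩
    rw [hFL, List.mem_toFinset, List.mem_filter] at hmem
    exact hmem.1
  have hx0mem : x0 ∈ c.support := List.mem_of_mem_tail hx0tl
  -- rotate at x0
  set c' := c.rotate x0 hx0mem with hc'
  have hcyc' : c'.IsCycle := hcyc.rotate hx0mem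
  have hnd' : (c'.edges.map φ).Nodup := by
    have hrot := c.rotate_edges x0 hx0mem
    exact ((hrot.perm.map φ).nodup_iff).mpr hnd
  have hsup' : ∀ v, v ∈ c'.support → v ∈ tl := by
    intro v hv
    have hvt := cycle_mem_tail hcyc' hv
    have hrot := c.support_rotate x0 hx0mem
    exact (hrot.perm.mem_iff).mp hvt
  have hkey : ∀ w, (KB k n).Adj x0 w → w ∈ c'.support → φ s(x0, w) = y := by
    intro w hadj hw
    have hwFR : w ∈ FR := by
      rw [hFR, List.mem_toFinset, List.mem_filter]
      refine ⟨hsup' w hw, ?_⟩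
      rcases w with i | j
      · simp [hx0] at hadj
      · simp
    rw [← hSFR, hS] at hwFR
    obtain ⟨j, hjT, rfl⟩ := Finset.mem_image.mp hwFR
    have hj := hT hjT
    rw [Finset.mem_filter] at hj
    exact hj.2
  -- decompose the rotated cycle
  obtain ⟨w, hadj, q, heq⟩ := Walk.not_nil_iff.mp hcyc'.not_nil
  obtain ⟨w', hadj', q', heq'⟩ := Walk.not_nil_iff.mp
    (show ¬ c'.reverse.Nil by
      rw [Walk.nil_iff_length_eq, Walk.length_reverse]
      have := hcyc'.three_le_length
      omega)
  have he1 : s(x0, w) ∈ c'.edges := by rw [heq]; simp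
  have hwsup : w ∈ c'.support := by rw [heq]; simp
  have he2 : s(x0, w') ∈ c'.edges := by
    have : s(x0, w') ∈ c'.reverse.edges := by rw [heq']; simp
    rw [Walk.edges_reverse, List.mem_reverse] at this
    exact this
  have hw'sup : w' ∈ c'.support := by
    have : w' ∈ c'.reverse.support := by rw [heq']; simp
    rwa [Walk.support_reverse, List.mem_reverse] at this
  have hφ1 := hkey w hadj hwsup
  have hφ2 := hkey w' hadj' hw'sup
  have hee : s(x0, w) = s(x0, w') :=
    List.inj_on_of_nodup_map hnd' he1 he2 (by rw [hφ1, hφ2])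
  have hww : w = w' := Sym2.congr_right.mp hee
  -- derive the contradiction: first edge equals last edge
  have hedges : c'.edges = s(x0, w) :: q.edges := by rw [heq]; simp
  have hlastE : c'.edges.getLast? = some (s(x0, w')) := by
    have h1 : c'.reverse.edges = s(x0, w') :: q'.edges := by rw [heq']; simp
    have : c'.edges = (s(x0, w') :: q'.edges).reverse := by
      rw [← h1, Walk.edges_reverse, List.reverse_reverse]
    rw [this, List.reverse_cons]
    exact List.getLast?_concat
  rw [← hww] at hlastE
  have hqlen : 2 ≤ q.edges.length := by
    have h3 := hcyc'.three_le_length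
    have hl : c'.length = q.length + 1 := by rw [heq]; simp
    rw [q.length_edges]
    omega
  cases hqe : q.edges with
  | nil => rw [hqe] at hqlen; simp at hqlen
  | cons a t =>
      rw [hedges, hqe, List.getLast?_cons_cons] at hlastE
      have hmem : s(x0, w) ∈ q.edges := by
        rw [hqe]
        exact List.mem_of_mem_getLast? hlastE
      have hnodup := hcyc'.edges_nodup
      rw [hedges] at hnodup
      exact (List.nodup_cons.mp hnodup).1 hmem

/-- for k ≥ 2 and n ≥ k, ⌈n/(k−1)⌉ ≤ crx_k(K_{k,n}) ≤ kn. -/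
theorem crx_k_completeBipartite_k (k n : ℕ) (hk : 2 ≤ k) (hn : k ≤ n) :
    (n + (k - 1) - 1) / (k - 1) ≤ (completeBipartiteGraph (Fin k) (Fin n)).crx k ∧
      (completeBipartiteGraph (Fin k) (Fin n)).crx k ≤ k * n := by
  have hmem : k * n ∈ {r | ∃ φ : Sym2 (Fin k ⊕ Fin n) → ℕ,
      (∀ e ∈ (completeBipartiteGraph (Fin k) (Fin n)).edgeSet, φ e < r) ∧
      (completeBipartiteGraph (Fin k) (Fin n)).IsRainbowCycleColoring k φ} :=
    upper_mem k n hk hn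
  constructor
  · refine le_csInf ⟨k * n, hmem⟩ ?_
    rintro r ⟨φ, hφ, hrb⟩
    have hcore := lower_core k n r hk hn φ hφ hrb
    rw [Nat.div_le_iff_le_mul_add_pred (show 0 < k - 1 by omega)]
    set m := (k - 1) * r with hm
    omega
  · exact Nat.sInf_le hmem
end

section
/- For k ≥ 2, m ≥ 2k and n > (k−1)(4k−1)^m, we have crx_k(K_{m,n}) ≥ 4k; that is, in any edge-colouring of K_{m,n} with at most 4k−1 colours there exist k vertices with no common rainbow cycle. -/
open SimpleGraph

namespace CrxAux

open Sum SimpleGraph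

lemma nodup3 {α : Type*} {a b : α} {l : List α} (h : (a :: b :: l).Nodup) :
    a ≠ b ∧ a ∉ l ∧ b ∉ l ∧ l.Nodup ∧ (a :: l).Nodup := by
  simp only [List.nodup_cons, List.mem_cons, not_or] at h ⊢
  tauto

lemma exists_first_edge {V : Type*} {G : SimpleGraph V} {x y : V} (p : G.Walk x y)
    (hp : ¬ p.Nil) : ∃ e L', p.edges = e :: L' ∧ x ∈ e := by
  cases p with
  | nil => exact absurd Walk.Nil.nil hp
  | cons h q => exact ⟨_, _, rfl, by simp⟩

/-- Every vertex on a cycle is incident to (at least) two distinct edges of the cycle. -/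
lemma two_incident {V : Type*} [DecidableEq V] {G : SimpleGraph V} {y : V} {c : G.Walk y y}
    (hc : c.IsCycle) {x : V} (hx : x ∈ c.support) :
    ∃ e₁ ∈ c.edges, ∃ e₂ ∈ c.edges, e₁ ≠ e₂ ∧ x ∈ e₁ ∧ x ∈ e₂ := by
  set p := c.rotate x hx with hpdef
  have hp : p.IsCycle := hc.rotate hx
  have hmem : ∀ e, e ∈ p.edges ↔ e ∈ c.edges := fun e => (c.rotate_edges x hx).perm.mem_iff
  obtain ⟨e₁, L', hL, hxe₁⟩ := exists_first_edge p hp.not_nil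
  obtain ⟨e₂, L'', hL2, hxe₂⟩ := exists_first_edge p.reverse (by
    rw [Walk.nil_iff_length_eq, Walk.length_reverse, ← Walk.nil_iff_length_eq]
    exact hp.not_nil)
  rw [Walk.edges_reverse] at hL2
  have he₂p : e₂ ∈ p.edges := by
    have : e₂ ∈ p.edges.reverse := by rw [hL2]; exact List.mem_cons_self
    simpa using this
  have hnd : p.edges.Nodup := hp.isCircuit.isTrail.edges_nodup
  have hlen : 3 ≤ p.edges.length := by
    rw [p.length_edges]; exact hp.three_le_length
  have hne : e₁ ≠ e₂ := by
    intro h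
    subst h
    rw [hL] at hL2 hnd hlen
    have hL'ne : L' ≠ [] := by
      intro h; subst h; simp at hlen
    have he₁L' : e₁ ∈ L' := by
      rcases List.exists_cons_of_ne_nil (List.reverse_ne_nil_iff.2 hL'ne) with ⟨a, t, hat⟩
      have hrev : (e₁ :: L').reverse = e₁ :: L'' := hL2
      rw [List.reverse_cons, hat] at hrev
      simp only [List.cons_append, List.cons.injEq] at hrev
      have : a ∈ L'.reverse := by rw [hat]; exact List.mem_cons_self
      rw [hrev.1] at this
      exact List.mem_reverse.1 this
    simp [List.nodup_cons, he₁L'] at hnd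
  exact ⟨e₁, (hmem e₁).1 (hL ▸ List.mem_cons_self), e₂, (hmem e₂).1 he₂p, hne, hxe₁, hxe₂⟩

variable {m n : ℕ}

/-- Walk `inr v → inl u₁ → inr v₁ → ⋯ → inl u_t → inr v_t → inl u₀`. -/
def tw (u0 : Fin m) : (l : List (Fin m × Fin n)) → (v : Fin n) →
      (completeBipartiteGraph (Fin m) (Fin n)).Walk (inr v) (inl u0)
  | [], _v => Walk.cons (by simp) Walk.nil
  | (u, v') :: l, _v =>
      Walk.cons (show (completeBipartiteGraph (Fin m) (Fin n)).Adj (inr _v) (inl u) by simp)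
        (Walk.cons (show (completeBipartiteGraph (Fin m) (Fin n)).Adj (inl u) (inr v') by simp)
          (tw u0 l v'))

def lastV : List (Fin m × Fin n) → Fin n → Fin n
  | [], v => v
  | (_, v') :: l, _ => lastV l v'

lemma lastV_mem (l : List (Fin m × Fin n)) (v : Fin n) (hl : l ≠ []) :
    lastV l v ∈ l.map Prod.snd := by
  induction l generalizing v with
  | nil => simp at hl
  | cons p l ih =>
    rcases p with ⟨u, v'⟩
    rcases eq_or_ne l [] with h | h
    · subst h; simp [lastV]
    · simp only [lastV, List.map_cons, List.mem_cons]
      exact Or.inr (ih v' h)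

lemma tw_mem_support (u0 : Fin m) (l : List (Fin m × Fin n)) (v : Fin n)
    (x : Fin m ⊕ Fin n) :
    x ∈ (tw u0 l v).support ↔ x = inr v ∨ x = inl u0 ∨ ∃ p ∈ l, x = inl p.1 ∨ x = inr p.2 := by
  induction l generalizing v with
  | nil => simp [tw]
  | cons p l ih =>
    rcases p with ⟨u, v'⟩
    have : (tw u0 ((u, v') :: l) v).support = inr v :: inl u :: (tw u0 l v').support := rfl
    rw [this]
    simp only [List.mem_cons, ih v']
    constructor
    · rintro (h | h | h | h | ⟨p, hp, h⟩)
      · exact Or.inl h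
      · exact Or.inr (Or.inr ⟨(u, v'), Or.inl rfl, Or.inl h⟩)
      · exact Or.inr (Or.inr ⟨(u, v'), Or.inl rfl, Or.inr h⟩)
      · exact Or.inr (Or.inl h)
      · exact Or.inr (Or.inr ⟨p, Or.inr hp, h⟩)
    · rintro (h | h | ⟨p, hp, h⟩)
      · exact Or.inl h
      · exact Or.inr (Or.inr (Or.inr (Or.inl h)))
      · rcases hp with rfl | hp'
        · rcases h with h | h
          · exact Or.inr (Or.inl h)
          · exact Or.inr (Or.inr (Or.inl h))
        · exact Or.inr (Or.inr (Or.inr (Or.inr ⟨p, hp', h⟩)))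

lemma tw_support_nodup (u0 : Fin m) (l : List (Fin m × Fin n)) (v : Fin n)
    (h1 : (u0 :: l.map Prod.fst).Nodup) (h2 : (v :: l.map Prod.snd).Nodup) :
    (tw u0 l v).support.Nodup := by
  induction l generalizing v with
  | nil => simp [tw]
  | cons p l ih =>
    rcases p with ⟨u, v'⟩
    rw [List.map_cons] at h1 h2
    obtain ⟨h1a, h1b, h1c, h1d, h1e⟩ := nodup3 h1
    obtain ⟨h2a, h2b, h2c, h2d, h2e⟩ := nodup3 h2
    have hs : (tw u0 l v').support.Nodup := ih v' h1e (by
      rw [List.nodup_cons]; exact ⟨h2c, h2d⟩)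
    show (inr v :: inl u :: (tw u0 l v').support).Nodup
    simp only [List.nodup_cons, List.mem_cons]
    refine ⟨?_, ?_, hs⟩
    · rintro (h | h)
      · exact absurd h (by simp)
      · rw [tw_mem_support] at h
        rcases h with h | h | ⟨p, hp, h | h⟩
        · exact h2a (Sum.inr.inj h)
        · simp at h
        · simp at h
        · have hv : v = p.2 := Sum.inr.inj h
          exact h2b (by rw [hv]; exact List.mem_map.2 ⟨p, hp, rfl⟩)
    · rw [tw_mem_support]
      rintro (h | h | ⟨p, hp, h | h⟩)
      · simp at h
      · exact h1a (Sum.inl.inj h).symm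
      · have hu : u = p.1 := Sum.inl.inj h
        exact h1c (by rw [hu]; exact List.mem_map.2 ⟨p, hp, rfl⟩)
      · simp at h

lemma tw_edges_mem (u0 : Fin m) (l : List (Fin m × Fin n)) (v : Fin n)
    {e : Sym2 (Fin m ⊕ Fin n)} (he : e ∈ (tw u0 l v).edges) :
    ∃ u' v'', e = s(inl u', inr v'') ∧ u' ∈ u0 :: l.map Prod.fst ∧
      v'' ∈ v :: l.map Prod.snd := by
  induction l generalizing v with
  | nil =>
    simp only [tw, Walk.edges_cons, Walk.edges_nil, List.mem_singleton] at he
    exact ⟨u0, v, by rw [he, Sym2.eq_swap], by simp, by simp⟩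
  | cons p l ih =>
    rcases p with ⟨u, v'⟩
    have : (tw u0 ((u, v') :: l) v).edges
        = s(inr v, inl u) :: s(inl u, inr v') :: (tw u0 l v').edges := rfl
    rw [this, List.mem_cons, List.mem_cons] at he
    rcases he with h | h | h
    · exact ⟨u, v, by rw [h, Sym2.eq_swap], by simp, by simp⟩
    · exact ⟨u, v', h, by simp, by simp⟩
    · obtain ⟨u', v'', hev, hu, hv⟩ := ih v' h
      refine ⟨u', v'', hev, ?_, ?_⟩
      · simp only [List.map_cons, List.mem_cons] at hu ⊢; tauto
      · simp only [List.map_cons, List.mem_cons] at hv ⊢; tauto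

lemma tw_edges_u0 (u0 : Fin m) (l : List (Fin m × Fin n)) (v : Fin n)
    (hu0 : u0 ∉ l.map Prod.fst) {e : Sym2 (Fin m ⊕ Fin n)} (he : e ∈ (tw u0 l v).edges)
    (hx : (inl u0 : Fin m ⊕ Fin n) ∈ e) : e = s(inl u0, inr (lastV l v)) := by
  induction l generalizing v with
  | nil =>
    simp only [tw, Walk.edges_cons, Walk.edges_nil, List.mem_singleton] at he
    rw [he, Sym2.eq_swap]; rfl
  | cons p l ih =>
    rcases p with ⟨u, v'⟩
    rw [List.map_cons, List.mem_cons, not_or] at hu0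
    have : (tw u0 ((u, v') :: l) v).edges
        = s(inr v, inl u) :: s(inl u, inr v') :: (tw u0 l v').edges := rfl
    rw [this, List.mem_cons, List.mem_cons] at he
    rcases he with h | h | h
    · exfalso; subst h
      rcases Sym2.mem_iff.1 hx with h | h
      · simp at h
      · exact hu0.1 (Sum.inl.inj h)
    · exfalso; subst h
      rcases Sym2.mem_iff.1 hx with h | h
      · exact hu0.1 (Sum.inl.inj h)
      · simp at h
    · exact ih v' hu0.2 h

lemma tw_edges_nodup (u0 : Fin m) (l : List (Fin m × Fin n)) (v : Fin n)
    (h1 : (u0 :: l.map Prod.fst).Nodup) (h2 : (v :: l.map Prod.snd).Nodup) :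
    (tw u0 l v).edges.Nodup := by
  induction l generalizing v with
  | nil => simp [tw]
  | cons p l ih =>
    rcases p with ⟨u, v'⟩
    rw [List.map_cons] at h1 h2
    obtain ⟨h1a, h1b, h1c, h1d, h1e⟩ := nodup3 h1
    obtain ⟨h2a, h2b, h2c, h2d, h2e⟩ := nodup3 h2
    have hrest : (tw u0 l v').edges.Nodup := ih v' h1e (by
      rw [List.nodup_cons]; exact ⟨h2c, h2d⟩)
    show (s(inr v, inl u) :: s(inl u, inr v') :: (tw u0 l v').edges).Nodup
    simp only [List.nodup_cons, List.mem_cons]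
    refine ⟨?_, ?_, hrest⟩
    · rintro (h | h)
      · rw [Sym2.eq_swap, Sym2.eq_iff] at h
        rcases h with ⟨ha, hb⟩ | ⟨ha, hb⟩
        · exact h2a (Sum.inr.inj hb.symm).symm
        · simp at ha
      · obtain ⟨u', v'', hev, hu, hv⟩ := tw_edges_mem u0 l v' h
        rw [Sym2.eq_swap, Sym2.eq_iff] at hev
        rcases hev with ⟨ha, hb⟩ | ⟨ha, hb⟩
        · have huu : u = u' := Sum.inl.inj ha
          subst huu
          rcases List.mem_cons.1 hu with h' | h'
          · exact h1a h'.symm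
          · exact h1c h'
        · simp at ha
    · intro h
      obtain ⟨u', v'', hev, hu, hv⟩ := tw_edges_mem u0 l v' h
      rw [Sym2.eq_iff] at hev
      rcases hev with ⟨ha, hb⟩ | ⟨ha, hb⟩
      · have huu : u = u' := Sum.inl.inj ha
        subst huu
        rcases List.mem_cons.1 hu with h' | h'
        · exact h1a h'.symm
        · exact h1c h'
      · simp at ha

/-- The zigzag cycle through all the `inl p.1` and `inr p.2` for `p ∈ l₀`. -/
lemma exists_cycle (l₀ : List (Fin m × Fin n)) (h1 : (l₀.map Prod.fst).Nodup)
    (h2 : (l₀.map Prod.snd).Nodup) (hlen : 2 ≤ l₀.length) :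
    ∃ (x : Fin m ⊕ Fin n) (c : (completeBipartiteGraph (Fin m) (Fin n)).Walk x x),
      c.IsCycle ∧ ∀ p ∈ l₀, inl p.1 ∈ c.support ∧ inr p.2 ∈ c.support := by
  match l₀, hlen with
  | (u0, v0) :: l, hlen =>
    have hl : l ≠ [] := by
      intro h; subst h; simp at hlen
    rw [List.map_cons] at h1 h2
    refine ⟨inl u0, Walk.cons (by simp) (tw u0 l v0), ?_, ?_⟩
    · rw [Walk.isCycle_def]
      refine ⟨?_, by simp, ?_⟩
      · rw [Walk.isTrail_def]
        show (s(inl u0, inr v0) :: (tw u0 l v0).edges).Nodup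
        rw [List.nodup_cons]
        refine ⟨?_, tw_edges_nodup u0 l v0 h1 h2⟩
        intro h
        have hkey := tw_edges_u0 u0 l v0 (List.nodup_cons.1 h1).1 h (by simp)
        rw [Sym2.eq_iff] at hkey
        rcases hkey with ⟨_, hb⟩ | ⟨ha, _⟩
        · have hv : v0 = lastV l v0 := Sum.inr.inj hb
          have hmem := lastV_mem l v0 hl
          rw [← hv] at hmem
          exact (List.nodup_cons.1 h2).1 hmem
        · simp at ha
      · show ((inl u0 : Fin m ⊕ Fin n) :: (tw u0 l v0).support).tail.Nodup
        simpa using tw_support_nodup u0 l v0 h1 h2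
    · intro p hp
      show _ ∈ (inl u0 : Fin m ⊕ Fin n) :: (tw u0 l v0).support ∧
        _ ∈ (inl u0 : Fin m ⊕ Fin n) :: (tw u0 l v0).support
      rcases List.mem_cons.1 hp with rfl | h
      · exact ⟨by simp, List.mem_cons.2 (Or.inr ((tw_mem_support u0 l v0 _).2 (Or.inl rfl)))⟩
      · exact ⟨List.mem_cons.2 (Or.inr ((tw_mem_support u0 l v0 _).2
            (Or.inr (Or.inr ⟨p, h, Or.inl rfl⟩)))),
          List.mem_cons.2 (Or.inr ((tw_mem_support u0 l v0 _).2
            (Or.inr (Or.inr ⟨p, h, Or.inr rfl⟩))))⟩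

/-- Edges of the complete bipartite graph have the form `s(inl u, inr v)`. -/
lemma edge_shape {e : Sym2 (Fin m ⊕ Fin n)}
    (he : e ∈ (completeBipartiteGraph (Fin m) (Fin n)).edgeSet) :
    ∃ u v, e = s(inl u, inr v) := by
  induction e with
  | _ a b =>
    rw [mem_edgeSet] at he
    rcases a with a | a <;> rcases b with b | b <;> simp at he
    · exact ⟨a, b, rfl⟩
    · exact ⟨b, a, Sym2.eq_swap⟩

end CrxAux


open CrxAux Sum Finset in
/-- for k ≥ 2, m ≥ 2k and n > (k−1)(4k−1)^m, crx_k(K_{m,n}) ≥ 4k. -/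
theorem crx_k_completeBipartite_lower (k m n : ℕ) (hk : 2 ≤ k) (hm : 2 * k ≤ m)
    (hn : (k - 1) * (4 * k - 1) ^ m < n) :
    4 * k ≤ (completeBipartiteGraph (Fin m) (Fin n)).crx k := by
  classical
  have hm1 : 1 ≤ m := le_trans (by omega) hm
  have hkn : k < n := by
    have h1 : (4 * k - 1) ≤ (4 * k - 1) ^ m := Nat.le_self_pow (by omega) _
    have h2 : (4 * k - 1) ^ m ≤ (k - 1) * (4 * k - 1) ^ m :=
      Nat.le_mul_of_pos_left _ (by omega)
    omega
  apply le_csInf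
  · -- nonempty: an injective colouring works
    refine ⟨Fintype.card (Sym2 (Fin m ⊕ Fin n)),
      fun e => ((Fintype.equivFin (Sym2 (Fin m ⊕ Fin n))) e : ℕ), fun e _ => Fin.is_lt _, ?_⟩
    intro S hS
    set A : Finset (Fin m) := Finset.univ.filter (fun a => inl a ∈ S) with hA
    set B : Finset (Fin n) := Finset.univ.filter (fun b => inr b ∈ S) with hB
    have hAcard : A.card ≤ k := by
      have hsub : A.image inl ⊆ S := by
        intro x hx
        simp only [Finset.mem_image] at hx
        obtain ⟨a, ha, rfl⟩ := hx
        simp only [hA, Finset.mem_filter] at ha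
        exact ha.2
      have := Finset.card_le_card hsub
      rwa [Finset.card_image_of_injective _ Sum.inl_injective, hS] at this
    have hBcard : B.card ≤ k := by
      have hsub : B.image inr ⊆ S := by
        intro x hx
        simp only [Finset.mem_image] at hx
        obtain ⟨a, ha, rfl⟩ := hx
        simp only [hB, Finset.mem_filter] at ha
        exact ha.2
      have := Finset.card_le_card hsub
      rwa [Finset.card_image_of_injective _ Sum.inr_injective, hS] at this
    set t := max 2 (max A.card B.card) with htdef
    have ht2 : 2 ≤ t := le_max_left _ _
    have htk : t ≤ k := max_le hk (max_le hAcard hBcard)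
    obtain ⟨At, hAAt, -, hAtcard⟩ := Finset.exists_subsuperset_card_eq
      (Finset.subset_univ A) (le_trans (le_max_left _ _) (le_max_right 2 _))
      (by simpa using le_trans htk (by omega) : t ≤ (Finset.univ : Finset (Fin m)).card)
    obtain ⟨Bt, hBBt, -, hBtcard⟩ := Finset.exists_subsuperset_card_eq
      (Finset.subset_univ B) (le_trans (le_max_right _ _) (le_max_right 2 _))
      (by simpa using le_trans htk (le_of_lt hkn) : t ≤ (Finset.univ : Finset (Fin n)).card)
    set us := At.toList with hus
    set vs := Bt.toList with hvs
    have huslen : us.length = t := by simp [hus, hAtcard, htdef]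
    have hvslen : vs.length = t := by simp [hvs, hBtcard, htdef]
    set l₀ := us.zip vs with hl₀
    have hfst : l₀.map Prod.fst = us := List.map_fst_zip (by omega)
    have hsnd : l₀.map Prod.snd = vs := List.map_snd_zip (by omega)
    have hlen : 2 ≤ l₀.length := by
      rw [hl₀, List.length_zip]; omega
    obtain ⟨x, c, hc, hcov⟩ := exists_cycle l₀
      (by rw [hfst]; exact At.nodup_toList)
      (by rw [hsnd]; exact Bt.nodup_toList) hlen
    refine ⟨x, c, hc, ?_, ?_⟩
    · intro v hv
      rcases v with a | b
      · have ha : a ∈ At := hAAt (by simp [hA, hv])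
        have ha' : a ∈ l₀.map Prod.fst := by rw [hfst, hus]; simpa using ha
        obtain ⟨p, hp, hpa⟩ := List.mem_map.1 ha'
        exact hpa ▸ (hcov p hp).1
      · have hb : b ∈ Bt := hBBt (by simp [hB, hv])
        have hb' : b ∈ l₀.map Prod.snd := by rw [hsnd, hvs]; simpa using hb
        obtain ⟨p, hp, hpb⟩ := List.mem_map.1 hb'
        exact hpb ▸ (hcov p hp).2
    · exact (hc.isCircuit.isTrail.edges_nodup).map
        (Fin.val_injective.comp (Fintype.equivFin (Sym2 (Fin m ⊕ Fin n))).injective)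
  · -- lower bound
    rintro r ⟨φ, hφ, hrb⟩
    by_contra hr4
    push_neg at hr4
    have hr1 : 1 ≤ r := by
      have := hφ s(inl ⟨0, by omega⟩, inr ⟨0, by omega⟩) (by rw [mem_edgeSet]; simp)
      omega
    have hrle : r ≤ 4 * k - 1 := by omega
    set pat : Fin n → (Fin m → Fin r) := fun v u =>
      ⟨φ s(inl u, inr v), hφ _ (by rw [mem_edgeSet]; simp)⟩ with hpat
    obtain ⟨y, -, hy⟩ := Finset.exists_lt_card_fiber_of_mul_lt_card_of_maps_to
      (f := pat) (s := Finset.univ) (t := Finset.univ) (n := k - 1)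
      (fun a _ => Finset.mem_univ _)
      (by
        have hcard : (Finset.univ : Finset (Fin m → Fin r)).card = r ^ m := by
          simp [Fintype.card_fun]
        rw [hcard, Finset.card_univ, Fintype.card_fin]
        calc r ^ m * (k - 1) = (k - 1) * r ^ m := Nat.mul_comm _ _
          _ ≤ (k - 1) * (4 * k - 1) ^ m :=
            Nat.mul_le_mul_left _ (Nat.pow_le_pow_left hrle m)
          _ < n := hn)
    have hyk : k ≤ (Finset.univ.filter fun v => pat v = y).card := by omega
    obtain ⟨S'', hS''sub, hS''card⟩ :=
      Finset.exists_subset_card_eq hyk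
    have hpateq : ∀ v ∈ S'', ∀ w ∈ S'', ∀ u : Fin m,
        φ s(inl u, inr v) = φ s(inl u, inr w) := by
      intro v hv w hw u
      have h1 : pat v = y := (Finset.mem_filter.1 (hS''sub hv)).2
      have h2 : pat w = y := (Finset.mem_filter.1 (hS''sub hw)).2
      have h3 : pat v u = pat w u := by rw [h1, h2]
      exact congrArg Fin.val h3
    obtain ⟨x, c, hc, hsupp, hmap⟩ := hrb (S''.image inr)
      (by rw [Finset.card_image_of_injective _ Sum.inr_injective, hS''card])
    have hEnodup : c.edges.Nodup := hc.isCircuit.isTrail.edges_nodup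
    have injφ : ∀ e ∈ c.edges, ∀ e' ∈ c.edges, φ e = φ e' → e = e' :=
      fun e he e' he' h => List.inj_on_of_nodup_map hmap he he' h
    set g : Fin n → Finset (Fin m) :=
      fun v => Finset.univ.filter (fun u => s(inl u, inr v) ∈ c.edges) with hg
    have hg2 : ∀ v ∈ S'', 2 ≤ (g v).card := by
      intro v hv
      have hvs : (inr v : Fin m ⊕ Fin n) ∈ c.support :=
        hsupp _ (Finset.mem_image_of_mem _ hv)
      obtain ⟨e₁, he₁, e₂, he₂, hne, hx1, hx2⟩ := two_incident hc hvs
      obtain ⟨u₁, v₁, rfl⟩ := edge_shape (Walk.edges_subset_edgeSet c he₁)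
      obtain ⟨u₂, v₂, rfl⟩ := edge_shape (Walk.edges_subset_edgeSet c he₂)
      have hv₁ : v₁ = v := by
        rcases Sym2.mem_iff.1 hx1 with h | h
        · simp at h
        · exact (Sum.inr.inj h).symm
      have hv₂ : v₂ = v := by
        rcases Sym2.mem_iff.1 hx2 with h | h
        · simp at h
        · exact (Sum.inr.inj h).symm
      subst hv₁; subst hv₂
      have hu12 : u₁ ≠ u₂ := fun h => hne (by rw [h])
      exact Finset.one_lt_card.2 ⟨u₁, by simp [hg, he₁], u₂, by simp [hg, he₂], hu12⟩
    have hgdisj : ∀ v ∈ S'', ∀ w ∈ S'', v ≠ w → Disjoint (g v) (g w) := by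
      intro v hv w hw hvw
      rw [Finset.disjoint_left]
      intro u huv huw
      simp only [hg, Finset.mem_filter] at huv huw
      have heq := injφ _ huv.2 _ huw.2 (hpateq v hv w hw u)
      rw [Sym2.eq_iff] at heq
      rcases heq with ⟨_, hb⟩ | ⟨ha, _⟩
      · exact hvw (Sum.inr.inj hb)
      · simp at ha
    set T := S''.biUnion g with hT
    have hTcard : 2 * k ≤ T.card := by
      rw [hT, Finset.card_biUnion hgdisj]
      calc 2 * k = ∑ _v ∈ S'', 2 := by
            rw [Finset.sum_const, hS''card, smul_eq_mul]; ring
        _ ≤ ∑ v ∈ S'', (g v).card := Finset.sum_le_sum hg2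
    set EF := c.edges.toFinset with hEF
    set h : Fin m → Finset (Sym2 (Fin m ⊕ Fin n)) :=
      fun u => EF.filter (fun e => (inl u : Fin m ⊕ Fin n) ∈ e) with hh
    have hh2 : ∀ u ∈ T, 2 ≤ (h u).card := by
      intro u hu
      rw [hT, Finset.mem_biUnion] at hu
      obtain ⟨v, hv, huv⟩ := hu
      simp only [hg, Finset.mem_filter] at huv
      have hus : (inl u : Fin m ⊕ Fin n) ∈ c.support :=
        Walk.fst_mem_support_of_mem_edges c huv.2
      obtain ⟨e₁, he₁, e₂, he₂, hne, hx1, hx2⟩ := two_incident hc hus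
      exact Finset.one_lt_card.2 ⟨e₁, by simp [hh, hEF, List.mem_toFinset, he₁, hx1],
        e₂, by simp [hh, hEF, List.mem_toFinset, he₂, hx2], hne⟩
    have hhdisj : ∀ u ∈ T, ∀ u' ∈ T, u ≠ u' → Disjoint (h u) (h u') := by
      intro u _ u' _ huu
      rw [Finset.disjoint_left]
      intro e heu heu'
      simp only [hh, Finset.mem_filter, hEF, List.mem_toFinset] at heu heu'
      obtain ⟨a, b, rfl⟩ := edge_shape (Walk.edges_subset_edgeSet c heu.1)
      have h1 : u = a := by
        rcases Sym2.mem_iff.1 heu.2 with h | h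
        · exact Sum.inl.inj h
        · simp at h
      have h2 : u' = a := by
        rcases Sym2.mem_iff.1 heu'.2 with h | h
        · exact Sum.inl.inj h
        · simp at h
      exact huu (h1.trans h2.symm)
    have hsub : T.biUnion h ⊆ EF := by
      intro e he
      rw [Finset.mem_biUnion] at he
      obtain ⟨u, hu, he⟩ := he
      exact (Finset.mem_filter.1 he).1
    have h4k : 4 * k ≤ EF.card := by
      calc 4 * k = 2 * (2 * k) := by ring
        _ ≤ 2 * T.card := Nat.mul_le_mul_left 2 hTcard
        _ = ∑ _u ∈ T, 2 := by rw [Finset.sum_const, smul_eq_mul]; ring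
        _ ≤ ∑ u ∈ T, (h u).card := Finset.sum_le_sum hh2
        _ = (T.biUnion h).card := (Finset.card_biUnion hhdisj).symm
        _ ≤ EF.card := Finset.card_le_card hsub
    have hlenEF : EF.card = c.edges.length := List.toFinset_card_of_nodup hEnodup
    have hlenle : c.edges.length ≤ r := by
      have hsubr : (c.edges.map φ).toFinset ⊆ Finset.range r := by
        intro a ha
        rw [List.mem_toFinset, List.mem_map] at ha
        obtain ⟨e, he, rfl⟩ := ha
        exact Finset.mem_range.2 (hφ _ (Walk.edges_subset_edgeSet c he))
      have hcr := Finset.card_le_card hsubr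
      rw [List.toFinset_card_of_nodup hmap, List.length_map] at hcr
      simpa using hcr
    omega
end

section
/- crx_2(Q_n) = crx_3(Q_n) = 2n for every n ≥ 2, where Q_n is the n-dimensional hypercube graph. -/
open SimpleGraph

/-- The hypercube `Q_n`: vertices are 0/1 vectors of length `n`, adjacent iff they
differ in exactly one coordinate. -/
def cubeGraph (n : ℕ) : SimpleGraph (Fin n → Bool) :=
  SimpleGraph.fromRel (fun u v => (Finset.univ.filter fun i => u i ≠ v i).card = 1)



namespace CrxAux


abbrev V (n : ℕ) := Fin n → Bool

def hamm {n : ℕ} (u v : V n) : ℕ := (Finset.univ.filter fun i => u i ≠ v i).card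

def wt {n : ℕ} (u : V n) : ℕ := (Finset.univ.filter fun i => u i = true).card

lemma hamm_self {n : ℕ} (u : V n) : hamm u u = 0 := by simp [hamm]

lemma hamm_comm {n : ℕ} (u v : V n) : hamm u v = hamm v u := by
  unfold hamm; congr 1; apply Finset.filter_congr; intro i _; exact ne_comm

lemma cube_adj {n : ℕ} {u v : V n} : (cubeGraph n).Adj u v ↔ hamm u v = 1 := by
  constructor
  · rintro ⟨hne, h | h⟩
    · exact h
    · rw [hamm_comm]; exact h
  · intro h
    refine ⟨?_, Or.inl h⟩
    rintro rfl
    rw [show hamm u u = 0 from hamm_self u] at h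
    exact absurd h (by omega)

lemma hamm_triangle {n : ℕ} (u v w : V n) : hamm u w ≤ hamm u v + hamm v w := by
  unfold hamm
  refine le_trans (Finset.card_le_card ?_) (Finset.card_union_le _ _)
  intro i hi
  simp only [Finset.mem_filter, Finset.mem_union, Finset.mem_univ, true_and] at hi ⊢
  by_contra hc
  push_neg at hc
  obtain ⟨h1, h2⟩ := hc
  exact hi (h1.trans h2)

lemma hamm_le_walk {n : ℕ} {u v : V n} (p : (cubeGraph n).Walk u v) :
    hamm u v ≤ p.length := by
  induction p with
  | nil => simp [hamm_self]
  | @cons a b c h q ih =>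
    have h1 : hamm a b = 1 := cube_adj.mp h
    have := hamm_triangle a b c
    simp only [Walk.length_cons]
    omega

lemma closed_walk_bound {n : ℕ} {u a b : V n} (c : (cubeGraph n).Walk u u)
    (ha : a ∈ c.support) (hb : b ∈ c.support) : 2 * hamm a b ≤ c.length := by
  have hsplit := c.take_spec ha
  have hlen : (c.takeUntil a ha).length + (c.dropUntil a ha).length = c.length := by
    conv_rhs => rw [← hsplit]
    rw [Walk.length_append]
  have hb' : b ∈ (c.takeUntil a ha).support ∨ b ∈ (c.dropUntil a ha).support := by
    rw [← hsplit] at hb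
    exact (Walk.mem_support_append_iff _ _).mp hb
  rcases hb' with hb1 | hb2
  · set p1 := c.takeUntil a ha with hp1
    have hsp := p1.take_spec hb1
    have hl2 : (p1.takeUntil b hb1).length + (p1.dropUntil b hb1).length = p1.length := by
      conv_rhs => rw [← hsp]; rw [Walk.length_append]
    have h1 : hamm a b ≤ (p1.dropUntil b hb1).length := by
      rw [hamm_comm]; exact hamm_le_walk _
    have h2 : hamm a b ≤ ((c.dropUntil a ha).append (p1.takeUntil b hb1)).length :=
      hamm_le_walk _
    rw [Walk.length_append] at h2
    omega
  · set p2 := c.dropUntil a ha with hp2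
    have hsp := p2.take_spec hb2
    have hl2 : (p2.takeUntil b hb2).length + (p2.dropUntil b hb2).length = p2.length := by
      conv_rhs => rw [← hsp]; rw [Walk.length_append]
    have h1 : hamm a b ≤ (p2.takeUntil b hb2).length := hamm_le_walk _
    have h2 : hamm a b ≤ ((p2.dropUntil b hb2).append (c.takeUntil a ha)).length := by
      rw [hamm_comm]; exact hamm_le_walk _
    rw [Walk.length_append] at h2
    omega


-- embedding
def emb {n : ℕ} (b : Bool) (w : V n) : V (n + 1) := Fin.snoc w b

lemma emb_inj {n : ℕ} (b : Bool) : Function.Injective (emb (n := n) b) := by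
  intro a a' h
  have := congrArg Fin.init h
  simpa [emb, Fin.init_snoc] using this

lemma emb_last {n : ℕ} (b : Bool) (w : V n) : emb b w (Fin.last n) = b := by
  simp [emb, Fin.snoc_last]

lemma emb_init {n : ℕ} (b : Bool) (w : V n) : Fin.init (emb b w) = w := by
  simp [emb, Fin.init_snoc]

lemma card_filter_eq_sum {n : ℕ} (p : Fin n → Prop) [DecidablePred p] :
    (Finset.univ.filter p).card = ∑ i, if p i then 1 else 0 := by
  rw [Finset.card_filter]

lemma hamm_emb {n : ℕ} (a a' : Bool) (u v : V n) :
    hamm (emb a u) (emb a' v) = hamm u v + if a = a' then 0 else 1 := by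
  unfold hamm
  rw [card_filter_eq_sum, card_filter_eq_sum, Fin.sum_univ_castSucc]
  simp only [emb, Fin.snoc_castSucc, Fin.snoc_last]
  congr 1
  by_cases h : a = a' <;> simp [h]

lemma wt_emb {n : ℕ} (b : Bool) (w : V n) :
    wt (emb b w) = wt w + if b then 1 else 0 := by
  unfold wt
  rw [card_filter_eq_sum, card_filter_eq_sum, Fin.sum_univ_castSucc]
  simp only [emb, Fin.snoc_castSucc, Fin.snoc_last]

lemma adj_emb {n : ℕ} {u v : V n} (b : Bool) (h : (cubeGraph n).Adj u v) :
    (cubeGraph (n + 1)).Adj (emb b u) (emb b v) := by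
  rw [cube_adj] at h ⊢
  rw [hamm_emb]
  simp [h]

def homEmb {n : ℕ} (b : Bool) : cubeGraph n →g cubeGraph (n + 1) :=
  ⟨emb b, fun h => adj_emb b h⟩

lemma cross_adj {n : ℕ} {a a' : Bool} (h : a ≠ a') (w : V n) :
    (cubeGraph (n + 1)).Adj (emb a w) (emb a' w) := by
  rw [cube_adj, hamm_emb]
  simp [hamm, h]

lemma wt_parity {n : ℕ} (u v : V n) : (wt u + wt v) % 2 = hamm u v % 2 := by
  unfold wt hamm
  rw [card_filter_eq_sum, card_filter_eq_sum, card_filter_eq_sum, ← Finset.sum_add_distrib,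
    Finset.sum_nat_mod, Finset.sum_nat_mod (Finset.univ) _ (fun i => if u i ≠ v i then 1 else 0)]
  congr 1
  apply Finset.sum_congr rfl
  intro i _
  cases hu : u i <;> cases hv : v i <;> simp

lemma adj_wt_ne {n : ℕ} {u v : V n} (h : (cubeGraph n).Adj u v) :
    wt u % 2 ≠ wt v % 2 := by
  have h1 := wt_parity u v
  rw [cube_adj.mp h] at h1
  omega

-- the extended coloring
def extColor (n : ℕ) (φ : Sym2 (V n) → ℕ) : Sym2 (V (n + 1)) → ℕ :=
  Sym2.lift ⟨fun u v =>
    if u (Fin.last n) = v (Fin.last n) then φ s(Fin.init u, Fin.init v)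
    else 2 * n + min (wt u) (wt v) % 2, by
      intro u v
      dsimp only
      by_cases h : u (Fin.last n) = v (Fin.last n)
      · rw [if_pos h, if_pos h.symm, Sym2.eq_swap]
      · rw [if_neg h, if_neg (fun h' => h h'.symm), Nat.min_comm]⟩

lemma extColor_inner {n : ℕ} (φ : Sym2 (V n) → ℕ) (b : Bool) (u v : V n) :
    extColor n φ s(emb b u, emb b v) = φ s(u, v) := by
  simp [extColor, Sym2.lift_mk, emb_last, emb_init]

lemma extColor_map {n : ℕ} (φ : Sym2 (V n) → ℕ) (b : Bool) (e : Sym2 (V n)) :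
    extColor n φ (Sym2.map (emb b) e) = φ e := by
  induction e using Sym2.ind with
  | _ u v => rw [Sym2.map_pair_eq, extColor_inner]

lemma extColor_cross {n : ℕ} (φ : Sym2 (V n) → ℕ) {a a' : Bool} (h : a ≠ a') (w : V n) :
    extColor n φ s(emb a w, emb a' w) = 2 * n + wt w % 2 := by
  have hne : emb a w (Fin.last n) ≠ emb a' w (Fin.last n) := by
    rw [emb_last, emb_last]; exact h
  simp only [extColor, Sym2.lift_mk, if_neg hne]
  congr 1
  rw [wt_emb, wt_emb]
  cases a <;> cases a' <;> simp_all

lemma extColor_lt {n : ℕ} (φ : Sym2 (V n) → ℕ) (hφ : ∀ e ∈ (cubeGraph n).edgeSet, φ e < 2 * n)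
    (e : Sym2 (V (n + 1))) (he : e ∈ (cubeGraph (n + 1)).edgeSet) :
    extColor n φ e < 2 * (n + 1) := by
  induction e using Sym2.ind with
  | _ u v =>
    rw [SimpleGraph.mem_edgeSet] at he
    by_cases h : u (Fin.last n) = v (Fin.last n)
    · have hadj : (cubeGraph n).Adj (Fin.init u) (Fin.init v) := by
        rw [cube_adj]
        have hh := cube_adj.mp he
        unfold hamm at hh ⊢
        rw [card_filter_eq_sum, Fin.sum_univ_castSucc] at hh
        rw [card_filter_eq_sum]
        simp only [if_neg (show ¬ u (Fin.last n) ≠ v (Fin.last n) from fun hc => hc h)] at hh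
        refine Eq.trans (Finset.sum_congr rfl fun i _ => ?_)
          (show (∑ x : Fin n, if u x.castSucc = v x.castSucc then 0 else 1) = 1 by
            simpa [Fin.init] using hh)
        split_ifs <;> simp_all [Fin.init]
      have := hφ _ ((SimpleGraph.mem_edgeSet _).mpr hadj)
      simp only [extColor, Sym2.lift_mk, if_pos h]
      omega
    · simp only [extColor, Sym2.lift_mk, if_neg h]
      have : min (wt u) (wt v) % 2 < 2 := Nat.mod_lt _ (by omega)
      omega


def Good (n : ℕ) (φ : Sym2 (V n) → ℕ) : Prop :=
  (∀ e ∈ (cubeGraph n).edgeSet, φ e < 2 * n) ∧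
  ∀ x y z : V n, ∃ (u : V n) (c : (cubeGraph n).Walk u u), c.IsCycle ∧
    x ∈ c.support ∧ y ∈ c.support ∧ z ∈ c.support ∧ (c.edges.map φ).Nodup

def v00 : V 2 := ![false, false]
def v10 : V 2 := ![true, false]
def v11 : V 2 := ![true, true]
def v01 : V 2 := ![false, true]

lemma adj2 {u v : V 2} (h : hamm u v = 1) : (cubeGraph 2).Adj u v := cube_adj.mpr h

def cyc2 : (cubeGraph 2).Walk v00 v00 :=
  (Walk.cons (v := v10) (adj2 (by decide)) (Walk.cons (v := v11) (adj2 (by decide)) (Walk.cons (v := v01) (adj2 (by decide)) (Walk.cons (adj2 (by decide)) Walk.nil))))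

def phi2 : Sym2 (V 2) → ℕ := fun e =>
  if e = s(v00, v10) then 0 else if e = s(v10, v11) then 1
  else if e = s(v11, v01) then 2 else 3

lemma cyc2_isCycle : cyc2.IsCycle := by
  refine ⟨⟨⟨?_⟩, by simp [cyc2]⟩, ?_⟩
  · decide
  · decide

lemma cyc2_support : ∀ v : V 2, v ∈ cyc2.support := by decide

lemma cyc2_rainbow : (cyc2.edges.map phi2).Nodup := by decide

lemma good_two : ∃ φ, Good 2 φ := by
  refine ⟨phi2, fun e _ => ?_, fun x y z => ⟨v00, cyc2, cyc2_isCycle, cyc2_support x,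
    cyc2_support y, cyc2_support z, cyc2_rainbow⟩⟩
  unfold phi2
  split_ifs <;> omega

@[simp] lemma homEmb_coe {n : ℕ} (b : Bool) : ⇑(homEmb (n := n) b) = emb b := rfl

lemma mem_tail_of_mem {n : ℕ} {u x : V n} {p : (cubeGraph n).Walk u u} (hp : p ≠ Walk.nil)
    (hx : x ∈ p.support) : x ∈ p.support.tail := by
  cases p with
  | nil => exact absurd rfl hp
  | cons h q =>
    rw [Walk.support_cons] at hx ⊢
    simp only [List.tail_cons]
    rcases List.mem_cons.mp hx with rfl | h'
    · exact q.end_mem_support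
    · exact h'

lemma closed_len_zero_of_nodup {n : ℕ} {v : V n} (q : (cubeGraph n).Walk v v)
    (h : q.support.Nodup) : q.length = 0 := by
  cases q with
  | nil => rfl
  | cons h' q' =>
    exfalso
    rw [Walk.support_cons, List.nodup_cons] at h
    exact h.1 q'.end_mem_support

lemma emb_not_mem_map {n : ℕ} {a b : Bool} (h : a ≠ b) (w : V n) (l : List (V n)) :
    emb a w ∉ List.map (emb b) l := by
  simp only [List.mem_map, not_exists, not_and]
  intro u' _ he
  apply h
  have := congrFun he (Fin.last n)
  rw [emb_last, emb_last] at this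
  exact this.symm

lemma caseA {n : ℕ} {φ : Sym2 (V n) → ℕ} (hg : Good n φ) (b : Bool) (x y z : V n) :
    ∃ (u : V (n + 1)) (c : (cubeGraph (n + 1)).Walk u u), c.IsCycle ∧
      emb b x ∈ c.support ∧ emb b y ∈ c.support ∧ emb b z ∈ c.support ∧
      (c.edges.map (extColor n φ)).Nodup := by
  obtain ⟨u, c, hc, hx, hy, hz, hrb⟩ := hg.2 x y z
  refine ⟨homEmb b u, c.map (homEmb b), hc.map (by simpa using emb_inj b), ?_, ?_, ?_, ?_⟩
  · rw [Walk.support_map]; exact List.mem_map_of_mem hx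
  · rw [Walk.support_map]; exact List.mem_map_of_mem hy
  · rw [Walk.support_map]; exact List.mem_map_of_mem hz
  · rw [Walk.edges_map, List.map_map]
    have heq : (extColor n φ) ∘ (Sym2.map (homEmb b)) = φ := by
      funext e; simpa using extColor_map φ b e
    rw [heq]
    exact hrb

lemma caseB {n : ℕ} {φ : Sym2 (V n) → ℕ} (hg : Good n φ) (b : Bool) (x y z : V n) :
    ∃ (u : V (n + 1)) (c : (cubeGraph (n + 1)).Walk u u), c.IsCycle ∧
      emb b x ∈ c.support ∧ emb b y ∈ c.support ∧ emb (!b) z ∈ c.support ∧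
      (c.edges.map (extColor n φ)).Nodup := by
  obtain ⟨u, c, hc, hz, hx, hy, hrb⟩ := hg.2 z x y
  have hdc : (c.rotate z hz).IsCycle := hc.rotate hz
  have hdrb : ((c.rotate z hz).edges.map φ).Nodup := by
    rw [((c.rotate_edges z hz).map φ).nodup_iff]
    exact hrb
  have hxd : x ∈ (c.rotate z hz).support := by
    have h1 : x ∈ c.support.tail := mem_tail_of_mem hc.ne_nil hx
    exact List.mem_of_mem_tail ((c.support_rotate z hz).mem_iff.mpr h1)
  have hyd : y ∈ (c.rotate z hz).support := by
    have h1 : y ∈ c.support.tail := mem_tail_of_mem hc.ne_nil hy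
    exact List.mem_of_mem_tail ((c.support_rotate z hz).mem_iff.mpr h1)
  generalize c.rotate z hz = d at hdc hdrb hxd hyd
  cases d with
  | nil => exact absurd rfl hdc.ne_nil
  | @cons _ v _ hadj q =>
    -- gather facts about q
    have hlen3 : 3 ≤ (Walk.cons hadj q).length := hdc.three_le_length
    have hqnodup : q.support.Nodup := by
      have := hdc.2
      simpa using this
    have hvz : v ≠ z := by
      rintro rfl
      have := closed_len_zero_of_nodup q hqnodup
      rw [Walk.length_cons] at hlen3
      omega
    have hxq : x ∈ q.support := by
      rw [Walk.support_cons] at hxd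
      rcases List.mem_cons.mp hxd with rfl | h'
      · exact q.end_mem_support
      · exact h'
    have hyq : y ∈ q.support := by
      rw [Walk.support_cons] at hyd
      rcases List.mem_cons.mp hyd with rfl | h'
      · exact q.end_mem_support
      · exact h'
    have hne : (!b) ≠ b := by cases b <;> simp
    -- the new walk
    set W : (cubeGraph (n + 1)).Walk (emb (!b) z) (emb (!b) z) :=
      Walk.cons (adj_emb (!b) hadj) (Walk.cons (cross_adj hne v)
        ((q.map (homEmb b)).concat (cross_adj (fun h => hne h.symm) z))) with hW
    have hWs : W.support = emb (!b) z :: emb (!b) v ::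
        (q.support.map (emb b) ++ [emb (!b) z]) := by
      rw [hW]
      simp [Walk.support_concat, Walk.support_map, List.concat_eq_append]
      erw [Walk.support_concat, Walk.support_map]
      simp [List.concat_eq_append]
    have hWe : W.edges.map (extColor n φ) = φ s(z, v) :: (2 * n + wt v % 2) ::
        (List.map φ q.edges ++ [2 * n + wt z % 2]) := by
      rw [hW]
      simp only [Walk.edges_cons, Walk.edges_concat, Walk.edges_map, List.concat_eq_append,
        List.map_cons, List.map_append, List.map_map, List.map_nil, homEmb_coe]
      rw [extColor_inner, extColor_cross φ hne]
      erw [Walk.edges_concat, Walk.edges_map]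
      simp only [List.concat_eq_append, List.map_append, List.map_map, List.map_cons,
        List.map_nil, homEmb_coe]
      rw [extColor_cross φ (fun h => hne h.symm)]
      congr 3
      exact List.map_congr_left (fun e _ => extColor_map φ b e)
    have hdnodup' : (φ s(z, v) :: List.map φ q.edges).Nodup := by
      simpa using hdrb
    have hinner_lt : ∀ a ∈ φ s(z, v) :: List.map φ q.edges, a < 2 * n := by
      intro a ha
      have he : (Walk.cons hadj q).edges.map φ = φ s(z, v) :: List.map φ q.edges := by simp
      rw [← he] at ha
      obtain ⟨e, hemem, rfl⟩ := List.mem_map.mp ha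
      exact hg.1 e ((Walk.cons hadj q).edges_subset_edgeSet hemem)
    have hparity : wt z % 2 ≠ wt v % 2 := adj_wt_ne hadj
    have hrbW : (W.edges.map (extColor n φ)).Nodup := by
      rw [hWe]
      have h1 := (List.nodup_cons.mp hdnodup').1
      have h2 := (List.nodup_cons.mp hdnodup').2
      have hhead := hinner_lt _ (List.mem_cons_self)
      have htail : ∀ a ∈ List.map φ q.edges, a < 2 * n := fun a ha =>
        hinner_lt a (List.mem_cons_of_mem _ ha)
      refine List.nodup_cons.mpr ⟨?_, List.nodup_cons.mpr ⟨?_, ?_⟩⟩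
      · simp only [List.mem_cons, List.mem_append, List.mem_singleton]
        push_neg
        refine ⟨by omega, fun hmem => h1 hmem, by omega, by simp⟩
      · simp only [List.mem_append, List.mem_singleton]
        push_neg
        refine ⟨fun hmem => ?_, by omega⟩
        have := htail _ hmem
        omega
      · rw [List.nodup_append']
        refine ⟨h2, List.nodup_singleton _, ?_⟩
        intro a ha
        simp only [List.mem_singleton]
        have := htail _ ha
        intro hc
        omega
    refine ⟨emb (!b) z, W, ?_, ?_, ?_, ?_, hrbW⟩
    · refine ⟨⟨⟨List.Nodup.of_map _ hrbW⟩, by rw [hW]; simp⟩, ?_⟩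
      have htail : W.support.tail = emb (!b) v :: (q.support.map (emb b) ++ [emb (!b) z]) := by
        rw [hWs, List.tail_cons]
      rw [htail]
      refine List.nodup_cons.mpr ⟨?_, ?_⟩
      · simp only [List.mem_append, List.mem_singleton]
        push_neg
        exact ⟨emb_not_mem_map hne v q.support, fun h => hvz (emb_inj _ h)⟩
      · rw [List.nodup_append']
        refine ⟨hqnodup.map (emb_inj b), List.nodup_singleton _, ?_⟩
        intro a ha
        simp only [List.mem_singleton]
        obtain ⟨w', hw', rfl⟩ := List.mem_map.mp ha
        intro hc
        have hb := congrFun hc (Fin.last n)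
        rw [emb_last, emb_last] at hb
        exact hne hb.symm
    · rw [hWs]
      simp only [List.mem_cons, List.mem_append, List.mem_singleton]
      exact Or.inr (Or.inr (Or.inl (List.mem_map_of_mem hxq)))
    · rw [hWs]
      simp only [List.mem_cons, List.mem_append, List.mem_singleton]
      exact Or.inr (Or.inr (Or.inl (List.mem_map_of_mem hyq)))
    · rw [hWs]
      exact List.mem_cons_self

lemma good_succ {n : ℕ} (φ : Sym2 (V n) → ℕ) (hg : Good n φ) : Good (n + 1) (extColor n φ) := by
  refine ⟨extColor_lt φ hg.1, ?_⟩
  intro x y z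
  obtain ⟨x', bx, rfl⟩ : ∃ (w : V n) (b : Bool), x = emb b w :=
    ⟨Fin.init x, x (Fin.last n), (Fin.snoc_init_self x).symm⟩
  obtain ⟨y', by', rfl⟩ : ∃ (w : V n) (b : Bool), y = emb b w :=
    ⟨Fin.init y, y (Fin.last n), (Fin.snoc_init_self y).symm⟩
  obtain ⟨z', bz, rfl⟩ : ∃ (w : V n) (b : Bool), z = emb b w :=
    ⟨Fin.init z, z (Fin.last n), (Fin.snoc_init_self z).symm⟩
  cases bx <;> cases by' <;> cases bz
  · exact caseA hg false x' y' z'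
  · exact caseB hg false x' y' z'
  · obtain ⟨u, c, h1, h2, h3, h4, h5⟩ := caseB hg false x' z' y'
    exact ⟨u, c, h1, h2, h4, h3, h5⟩
  · obtain ⟨u, c, h1, h2, h3, h4, h5⟩ := caseB hg true y' z' x'
    exact ⟨u, c, h1, h4, h2, h3, h5⟩
  · obtain ⟨u, c, h1, h2, h3, h4, h5⟩ := caseB hg false y' z' x'
    exact ⟨u, c, h1, h4, h2, h3, h5⟩
  · obtain ⟨u, c, h1, h2, h3, h4, h5⟩ := caseB hg true x' z' y'
    exact ⟨u, c, h1, h2, h4, h3, h5⟩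
  · exact caseB hg true x' y' z'
  · exact caseA hg true x' y' z'

lemma good_of_two_le : ∀ n, 2 ≤ n → ∃ φ, Good n φ := by
  intro n hn
  induction n, hn using Nat.le_induction with
  | base => exact good_two
  | succ n hn ih =>
    obtain ⟨φ, hφ⟩ := ih
    exact ⟨extColor n φ, good_succ φ hφ⟩

def zeroV (n : ℕ) : V n := fun _ => false
def oneV (n : ℕ) : V n := fun _ => true
def eZero (n : ℕ) : V n := fun i => decide (i.val = 0)

lemma hamm_zero_one (n : ℕ) : hamm (zeroV n) (oneV n) = n := by
  simp [hamm, zeroV, oneV]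

lemma crx_lower {n k r : ℕ} (S : Finset (V n)) (hSc : S.card = k) (h0 : zeroV n ∈ S)
    (h1 : oneV n ∈ S)
    (hr : r ∈ {r | ∃ φ : Sym2 (V n) → ℕ, (∀ e ∈ (cubeGraph n).edgeSet, φ e < r) ∧
      (cubeGraph n).IsRainbowCycleColoring k φ}) :
    2 * n ≤ r := by
  obtain ⟨φ, hφ, hrb⟩ := hr
  obtain ⟨u, c, hc, hmem, hnodup⟩ := hrb S hSc
  have hlen : 2 * n ≤ c.length := by
    have := closed_walk_bound c (hmem _ h0) (hmem _ h1)
    rwa [hamm_zero_one] at this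
  have hfin : (c.edges.map φ).toFinset ⊆ Finset.range r := by
    intro a ha
    rw [List.mem_toFinset] at ha
    obtain ⟨e, he, rfl⟩ := List.mem_map.mp ha
    exact Finset.mem_range.mpr (hφ e (c.edges_subset_edgeSet he))
  have hcard := Finset.card_le_card hfin
  rw [List.toFinset_card_of_nodup hnodup, Finset.card_range, List.length_map,
    c.length_edges] at hcard
  omega

lemma crx_upper_mem {n k : ℕ} (φ : Sym2 (V n) → ℕ) (hg : Good n φ) (hk : k = 2 ∨ k = 3) :
    (2 * n) ∈ {r | ∃ φ : Sym2 (V n) → ℕ, (∀ e ∈ (cubeGraph n).edgeSet, φ e < r) ∧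
      (cubeGraph n).IsRainbowCycleColoring k φ} := by
  refine ⟨φ, hg.1, ?_⟩
  intro S hS
  rcases hk with rfl | rfl
  · obtain ⟨a, b, hab, rfl⟩ := Finset.card_eq_two.mp hS
    obtain ⟨u, c, h1, h2, h3, _, h5⟩ := hg.2 a b b
    refine ⟨u, c, h1, ?_, h5⟩
    intro v hv
    rcases Finset.mem_insert.mp hv with rfl | hv
    · exact h2
    · rw [Finset.mem_singleton] at hv; subst hv; exact h3
  · obtain ⟨a, b, cc, hab, hac, hbc, rfl⟩ := Finset.card_eq_three.mp hS
    obtain ⟨u, c, h1, h2, h3, h4, h5⟩ := hg.2 a b cc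
    refine ⟨u, c, h1, ?_, h5⟩
    intro v hv
    rcases Finset.mem_insert.mp hv with rfl | hv
    · exact h2
    rcases Finset.mem_insert.mp hv with rfl | hv
    · exact h3
    · rw [Finset.mem_singleton] at hv; subst hv; exact h4


end CrxAux

/-- crx_2(Q_n) = crx_3(Q_n) = 2n for n ≥ 2. -/
theorem crx_two_three_cube (n : ℕ) (hn : 2 ≤ n) :
    (cubeGraph n).crx 2 = 2 * n ∧ (cubeGraph n).crx 3 = 2 * n := by

  classical
  obtain ⟨φ, hg⟩ := CrxAux.good_of_two_le n hn
  have hzo : CrxAux.zeroV n ≠ CrxAux.oneV n := by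
    intro h
    have := congrFun h ⟨0, by omega⟩
    simp [CrxAux.zeroV, CrxAux.oneV] at this
  have hze : CrxAux.zeroV n ≠ CrxAux.eZero n := by
    intro h
    have := congrFun h ⟨0, by omega⟩
    simp [CrxAux.zeroV, CrxAux.eZero] at this
  have heo : CrxAux.eZero n ≠ CrxAux.oneV n := by
    intro h
    have := congrFun h ⟨1, by omega⟩
    simp [CrxAux.oneV, CrxAux.eZero] at this
  constructor
  · apply le_antisymm
    · exact Nat.sInf_le (CrxAux.crx_upper_mem φ hg (Or.inl rfl))
    · refine le_csInf ⟨2 * n, CrxAux.crx_upper_mem φ hg (Or.inl rfl)⟩ ?_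
      intro r hr
      refine CrxAux.crx_lower {CrxAux.zeroV n, CrxAux.oneV n} ?_ ?_ ?_ hr
      · exact Finset.card_eq_two.mpr ⟨_, _, hzo, rfl⟩
      · simp
      · simp
  · apply le_antisymm
    · exact Nat.sInf_le (CrxAux.crx_upper_mem φ hg (Or.inr rfl))
    · refine le_csInf ⟨2 * n, CrxAux.crx_upper_mem φ hg (Or.inr rfl)⟩ ?_
      intro r hr
      refine CrxAux.crx_lower {CrxAux.zeroV n, CrxAux.eZero n, CrxAux.oneV n} ?_ ?_ ?_ hr
      · exact Finset.card_eq_three.mpr ⟨_, _, _, hze, hzo, heo, rfl⟩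
      · simp
      · simp
end

section
/- For 2^{n−1} ≤ k ≤ 2^n and n ≥ 2, crx_k(Q_n) = 2^n; in particular, any cycle of Q_n containing all 2^{n−1} vertices of one bipartition class must be a Hamilton cycle. -/
open SimpleGraph

/-- Gray code. -/
def gray (i : ℕ) : ℕ := i ^^^ (i / 2)

lemma gray_injective : Function.Injective gray := by
  intro i j h
  unfold gray at h
  have h2 : (i ^^^ j) = (i ^^^ j) / 2 := by
    apply Nat.eq_of_testBit_eq
    intro b
    have hb := congrArg (fun x => x.testBit b) h
    simp only [Nat.testBit_xor, Nat.testBit_div_two] at hb ⊢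
    revert hb
    cases (i.testBit b) <;> cases (j.testBit b) <;>
      cases (i.testBit (b+1)) <;> cases (j.testBit (b+1)) <;> decide
  have : i ^^^ j = 0 := by
    by_contra hne
    have := Nat.div_lt_self (Nat.pos_of_ne_zero hne) one_lt_two
    omega
  exact Nat.xor_eq_zero_iff.mp this

lemma gray_lt {n i : ℕ} (h : i < 2 ^ n) : gray i < 2 ^ n :=
  Nat.xor_lt_two_pow h (lt_of_le_of_lt (Nat.div_le_self _ _) h)

lemma xor_succ (i : ℕ) : ∃ m, 1 ≤ m ∧ i ^^^ (i + 1) = 2 ^ m - 1 := by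
  induction i using Nat.strong_induction_on with
  | _ i ih =>
    rcases Nat.even_or_odd i with ⟨a, ha⟩ | ⟨a, ha⟩
    · refine ⟨1, le_refl _, ?_⟩
      subst ha
      apply Nat.eq_of_testBit_eq
      intro b
      cases b with
      | zero =>
        have h1 : (a + a) % 2 = 0 := by omega
        have h2 : (a + a + 1) % 2 = 1 := by omega
        rw [Nat.testBit_xor, Nat.testBit_zero, Nat.testBit_zero, Nat.testBit_zero, h1, h2]
        decide
      | succ b =>
        rw [Nat.testBit_xor, Nat.testBit_succ, Nat.testBit_succ, Nat.testBit_succ]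
        have h1 : (a + a) / 2 = a := by omega
        have h2 : (a + a + 1) / 2 = a := by omega
        rw [h1, h2]
        simp
    · obtain ⟨m, hm, hx⟩ := ih a (by omega)
      refine ⟨m + 1, by omega, ?_⟩
      have key : i ^^^ (i+1) = 2 * (a ^^^ (a+1)) + 1 := by
        apply Nat.eq_of_testBit_eq
        intro b
        cases b with
        | zero =>
          have h1 : i % 2 = 1 := by omega
          have h2 : (i+1) % 2 = 0 := by omega
          have h3 : (2 * (a ^^^ (a+1)) + 1) % 2 = 1 := by omega
          rw [Nat.testBit_xor, Nat.testBit_zero, Nat.testBit_zero, Nat.testBit_zero,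
            h1, h2, h3]
          decide
        | succ b =>
          have h1 : i / 2 = a := by omega
          have h2 : (i+1) / 2 = a + 1 := by omega
          have h3 : (2 * (a ^^^ (a+1)) + 1) / 2 = a ^^^ (a+1) := by omega
          rw [Nat.testBit_xor, Nat.testBit_succ, Nat.testBit_succ, Nat.testBit_succ,
            h1, h2, h3, Nat.testBit_xor]
      rw [key, hx]
      have h2m : 2 ^ m ≥ 2 := by
        calc 2 ^ m ≥ 2 ^ 1 := Nat.pow_le_pow_right (by norm_num) hm
        _ = 2 := by norm_num
      rw [pow_succ]
      omega

lemma gray_succ_xor (i : ℕ) : ∃ m, gray i ^^^ gray (i+1) = 2 ^ m := by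
  obtain ⟨m, hm, hx⟩ := xor_succ i
  refine ⟨m - 1, ?_⟩
  have hdist : gray i ^^^ gray (i+1) = (i ^^^ (i+1)) ^^^ ((i ^^^ (i+1)) / 2) := by
    unfold gray
    apply Nat.eq_of_testBit_eq
    intro b
    simp only [Nat.testBit_xor, Nat.testBit_div_two, Nat.testBit_xor]
    cases (i.testBit b) <;> cases ((i+1).testBit b) <;>
      cases (i.testBit (b+1)) <;> cases ((i+1).testBit (b+1)) <;> rfl
  rw [hdist, hx]
  have h2m : 2 ^ m = 2 * 2 ^ (m - 1) := by
    rw [← pow_succ']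
    congr 1
    omega
  have h2 : (2 ^ m - 1) / 2 = 2 ^ (m-1) - 1 := by omega
  rw [h2]
  apply Nat.eq_of_testBit_eq
  intro b
  rw [Nat.testBit_xor, Nat.testBit_two_pow_sub_one, Nat.testBit_two_pow_sub_one,
    Nat.testBit_two_pow]
  rcases lt_trichotomy b (m-1) with h | h | h
  · have hb1 : b < m := by omega
    have hb2 : ¬ (m - 1 = b) := by omega
    simp [h, hb1, hb2]
  · have hb1 : b < m := by omega
    have hb2 : ¬ (b < m - 1) := by omega
    have hb3 : m - 1 = b := by omega
    simp [hb1, hb2, hb3]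
  · have hb1 : ¬ (b < m) := by omega
    have hb2 : ¬ (b < m - 1) := by omega
    have hb3 : ¬ (m - 1 = b) := by omega
    simp [hb1, hb2, hb3]

/-- vertex of the cube corresponding to the Gray code of `i` -/
def vtx (n : ℕ) (i : ℕ) : Fin n → Bool := fun j => (gray i).testBit j

lemma vtx_inj {n i i' : ℕ} (h : i < 2^n) (h' : i' < 2^n) (he : vtx n i = vtx n i') :
    i = i' := by
  apply gray_injective
  apply Nat.eq_of_testBit_eq
  intro b
  by_cases hb : b < n
  · exact congrFun he ⟨b, hb⟩
  · have h1 : gray i < 2 ^ b :=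
      lt_of_lt_of_le (gray_lt h) (Nat.pow_le_pow_right (by norm_num) (by omega))
    have h2 : gray i' < 2 ^ b :=
      lt_of_lt_of_le (gray_lt h') (Nat.pow_le_pow_right (by norm_num) (by omega))
    rw [Nat.testBit_lt_two_pow h1, Nat.testBit_lt_two_pow h2]

lemma adj_of_xor {n i i' m : ℕ} (hi : i < 2^n) (hi' : i' < 2^n)
    (hx : gray i ^^^ gray i' = 2 ^ m) :
    (cubeGraph n).Adj (vtx n i) (vtx n i') := by
  have hmn : m < n := by
    have := Nat.xor_lt_two_pow (gray_lt hi) (gray_lt hi')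
    rw [hx] at this
    exact (Nat.pow_lt_pow_iff_right (by norm_num)).mp this
  have hdiff : ∀ j : Fin n, vtx n i j ≠ vtx n i' j ↔ j = ⟨m, hmn⟩ := by
    intro j
    have : (gray i ^^^ gray i').testBit j = ((gray i).testBit j ^^ (gray i').testBit j) :=
      Nat.testBit_xor _ _ _
    rw [hx, Nat.testBit_two_pow] at this
    constructor
    · intro hne
      have : decide (m = (j:ℕ)) = true := by
        rw [this]
        revert hne
        unfold vtx
        cases ((gray i).testBit j) <;> cases ((gray i').testBit j) <;> simp
      have := of_decide_eq_true this
      exact (Fin.ext this.symm)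
    · intro hj
      subst hj
      simp only [decide_eq_true_eq] at this
      unfold vtx
      intro hc
      rw [hc] at this
      simp at this
  rw [cubeGraph, SimpleGraph.fromRel_adj]
  constructor
  · intro hc
    have := (hdiff ⟨m, hmn⟩).mpr rfl
    exact this (congrFun hc _)
  · left
    rw [Finset.card_eq_one]
    exact ⟨⟨m, hmn⟩, by ext j; simp [hdiff j]⟩

lemma adj_vtx {n i : ℕ} (h : i + 1 < 2^n) :
    (cubeGraph n).Adj (vtx n i) (vtx n (i+1)) := by
  obtain ⟨m, hm⟩ := gray_succ_xor i
  exact adj_of_xor (by omega) h hm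

lemma gray_pow_sub_one {n : ℕ} (hn : 1 ≤ n) : gray (2 ^ n - 1) = 2 ^ (n-1) := by
  unfold gray
  have h2m : 2 ^ n = 2 * 2 ^ (n - 1) := by
    rw [← pow_succ']
    congr 1
    omega
  have h2 : (2 ^ n - 1) / 2 = 2 ^ (n-1) - 1 := by omega
  rw [h2]
  apply Nat.eq_of_testBit_eq
  intro b
  rw [Nat.testBit_xor, Nat.testBit_two_pow_sub_one, Nat.testBit_two_pow_sub_one,
    Nat.testBit_two_pow]
  rcases lt_trichotomy b (n-1) with h | h | h
  · have hb1 : b < n := by omega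
    have hb2 : ¬ (n - 1 = b) := by omega
    simp [h, hb1, hb2]
  · have hb1 : b < n := by omega
    have hb2 : ¬ (b < n - 1) := by omega
    have hb3 : n - 1 = b := by omega
    simp [hb1, hb2, hb3]
  · have hb1 : ¬ (b < n) := by omega
    have hb2 : ¬ (b < n - 1) := by omega
    have hb3 : ¬ (n - 1 = b) := by omega
    simp [hb1, hb2, hb3]

lemma adj_vtx_last {n : ℕ} (hn : 2 ≤ n) :
    (cubeGraph n).Adj (vtx n 0) (vtx n (2^n - 1)) := by
  have h1 : (1:ℕ) ≤ 2 ^ n := Nat.one_le_two_pow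
  apply adj_of_xor (n := n) (m := n - 1) (Nat.pow_pos (by norm_num)) (by omega)
  rw [gray_pow_sub_one (by omega)]
  have : gray 0 = 0 := rfl
  rw [this, Nat.zero_xor]

lemma ham_path (n : ℕ) : ∀ i : ℕ, i < 2^n →
    ∃ w : (cubeGraph n).Walk (vtx n 0) (vtx n i),
      w.length = i ∧ w.support = (List.range (i+1)).map (vtx n) ∧
      w.edges = (List.range i).map (fun j => s(vtx n j, vtx n (j+1))) := by
  intro i
  induction i with
  | zero =>
    intro _
    exact ⟨SimpleGraph.Walk.nil, rfl, by simp [List.range_succ], by simp⟩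
  | succ i ih =>
    intro hi
    obtain ⟨w, hlen, hsupp, hedges⟩ := ih (by omega)
    refine ⟨w.concat (adj_vtx hi), ?_, ?_, ?_⟩
    · rw [SimpleGraph.Walk.length_concat, hlen]
    · rw [SimpleGraph.Walk.support_concat, hsupp,
        show i + 1 + 1 = (i+1) + 1 from rfl, List.range_succ (n := i+1), List.range_succ (n := i)]
      simp
    · rw [SimpleGraph.Walk.edges_concat, hedges, List.range_succ]
      simp

lemma ham_cycle {n : ℕ} (hn : 2 ≤ n) :
    ∃ (u : Fin n → Bool) (c : (cubeGraph n).Walk u u),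
      c.IsCycle ∧ (∀ v, v ∈ c.support) ∧ c.length = 2^n := by
  classical
  have h2n : (4:ℕ) ≤ 2 ^ n := by
    calc (4:ℕ) = 2 ^ 2 := by norm_num
    _ ≤ 2 ^ n := Nat.pow_le_pow_right (by norm_num) hn
  set L := 2^n - 1 with hL
  obtain ⟨P, hlen, hsupp, hedges⟩ := ham_path n L (by omega)
  have hPnodup : P.support.Nodup := by
    rw [hsupp]
    apply List.Nodup.map_on
    · intro x hx y hy hxy
      rw [List.mem_range] at hx hy
      exact vtx_inj (by omega) (by omega) hxy
    · exact List.nodup_range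
  have hPpath : P.IsPath := SimpleGraph.Walk.IsPath.mk' hPnodup
  have hadj : (cubeGraph n).Adj (vtx n 0) (vtx n L) := adj_vtx_last hn
  refine ⟨vtx n 0, SimpleGraph.Walk.cons hadj P.reverse, ?_, ?_, ?_⟩
  · rw [SimpleGraph.Walk.cons_isCycle_iff]
    refine ⟨hPpath.reverse, ?_⟩
    rw [SimpleGraph.Walk.edges_reverse, List.mem_reverse, hedges]
    intro hmem
    rw [List.mem_map] at hmem
    obtain ⟨j, hj, hjeq⟩ := hmem
    rw [List.mem_range] at hj
    rw [Sym2.eq_iff] at hjeq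
    rcases hjeq with ⟨h1, h2⟩ | ⟨h1, h2⟩
    · have e1 : j = 0 := vtx_inj (by omega) (by omega) h1
      have e2 : (j:ℕ)+1 = L := vtx_inj (by omega) (by omega) h2
      omega
    · have e1 : (j:ℕ)+1 = 0 := vtx_inj (by omega) (by omega) h2
      omega
  · intro v
    have huniv : P.support.toFinset = Finset.univ := by
      apply Finset.eq_univ_of_card
      rw [List.card_toFinset, hPnodup.dedup, hsupp, List.length_map, List.length_range]
      simp only [Fintype.card_fun, Fintype.card_bool, Fintype.card_fin]
      omega
    have : v ∈ P.support := by
      rw [← List.mem_toFinset, huniv]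
      exact Finset.mem_univ v
    rw [SimpleGraph.Walk.support_cons, List.mem_cons]
    right
    rw [SimpleGraph.Walk.support_reverse, List.mem_reverse]
    exact this
  · rw [SimpleGraph.Walk.length_cons, SimpleGraph.Walk.length_reverse, hlen]
    omega

/-- parity of the weight of a vertex -/
def par {n : ℕ} (v : Fin n → Bool) : ZMod 2 :=
  ∑ i, if v i then 1 else 0

lemma par_eq_card {n : ℕ} (v : Fin n → Bool) :
    par v = ((Finset.univ.filter fun i => v i = true).card : ZMod 2) := by
  rw [par, Finset.sum_boole]

lemma par_eq_zero_iff {n : ℕ} (v : Fin n → Bool) :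
    par v = 0 ↔ (Finset.univ.filter fun i => v i = true).card % 2 = 0 := by
  rw [par_eq_card, ZMod.natCast_eq_zero_iff, Nat.dvd_iff_mod_eq_zero]

lemma par_ne_of_adj {n : ℕ} {u v : Fin n → Bool} (h : (cubeGraph n).Adj u v) :
    par u ≠ par v := by
  rw [cubeGraph, SimpleGraph.fromRel_adj] at h
  have hcard : (Finset.univ.filter fun i => u i ≠ v i).card = 1 := by
    rcases h.2 with h1 | h1
    · exact h1
    · rw [← h1]
      congr 1
      ext i
      simp [ne_comm]
  have hsum : par u + par v = 1 := by
    have : par u + par v = ∑ i, ((if u i then 1 else 0) + (if v i then 1 else 0) : ZMod 2) := by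
      rw [par, par, Finset.sum_add_distrib]
    rw [this]
    have : ∀ i, ((if u i then 1 else 0) + (if v i then 1 else 0) : ZMod 2)
        = if u i ≠ v i then 1 else 0 := by
      intro i
      cases hu : u i <;> cases hv : v i <;> simp <;> decide
    rw [Finset.sum_congr rfl (fun i _ => this i), Finset.sum_boole, hcard, Nat.cast_one]
  intro he
  rw [he, CharTwo.add_self_eq_zero] at hsum
  exact zero_ne_one hsum

lemma zmod2_cases (x : ZMod 2) : x = 0 ∨ x = 1 := by revert x; decide

lemma card_evens {n : ℕ} (hn : 1 ≤ n) :
    (Finset.univ.filter fun v : Fin n → Bool => par v = 0).card = 2 ^ (n-1) := by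
  classical
  have hflip : ∀ v : Fin n → Bool,
      par (Function.update v ⟨0, by omega⟩ (!v ⟨0, by omega⟩)) = par v + 1 := by
    intro v
    set i0 : Fin n := ⟨0, by omega⟩
    rw [par, par,
      ← Finset.add_sum_erase _ (fun i => if Function.update v i0 (!v i0) i then (1:ZMod 2) else 0)
        (Finset.mem_univ i0),
      ← Finset.add_sum_erase _ (fun i => if v i then (1:ZMod 2) else 0) (Finset.mem_univ i0)]
    have hrest : ∑ i ∈ Finset.univ.erase i0,
        (if Function.update v i0 (!v i0) i then (1:ZMod 2) else 0)
        = ∑ i ∈ Finset.univ.erase i0, (if v i then (1:ZMod 2) else 0) := by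
      apply Finset.sum_congr rfl
      intro i hi
      rw [Function.update_of_ne (Finset.ne_of_mem_erase hi)]
    rw [hrest, Function.update_self]
    cases hv : v i0 <;>
      simp only [hv, if_true, if_false, Bool.not_true, Bool.not_false] <;> ring_nf <;>
      simp [CharTwo.two_eq_zero]
  have hbij : (Finset.univ.filter fun v : Fin n → Bool => par v = 0).card
      = (Finset.univ.filter fun v : Fin n → Bool => ¬ (par v = 0)).card := by
    apply Finset.card_nbij' (i := fun v => Function.update v ⟨0, by omega⟩ (!v ⟨0, by omega⟩))
      (j := fun v => Function.update v ⟨0, by omega⟩ (!v ⟨0, by omega⟩))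
    · intro v hv
      simp only [Finset.mem_coe, Finset.mem_filter, Finset.mem_univ, true_and] at hv ⊢
      rw [hflip, hv]
      decide
    · intro v hv
      simp only [Finset.mem_coe, Finset.mem_filter, Finset.mem_univ, true_and] at hv ⊢
      rw [hflip]
      rcases zmod2_cases (par v) with h | h
      · exact absurd h hv
      · rw [h]; decide
    · intro v _
      ext j
      by_cases hj : j = (⟨0, by omega⟩ : Fin n)
      · subst hj; simp
      · beta_reduce
        rw [Function.update_of_ne hj, Function.update_of_ne hj]
    · intro v _
      ext j
      by_cases hj : j = (⟨0, by omega⟩ : Fin n)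
      · subst hj; simp
      · beta_reduce
        rw [Function.update_of_ne hj, Function.update_of_ne hj]
  have htot := Finset.card_filter_add_card_filter_not
    (s := (Finset.univ : Finset (Fin n → Bool))) (fun v => par v = 0)
  have hcard : (Finset.univ : Finset (Fin n → Bool)).card = 2 ^ n := by
    simp [Finset.card_univ]
  have hpow : 2 ^ n = 2 * 2 ^ (n-1) := by
    rw [← pow_succ']
    congr 1
    omega
  omega

section WalkCount

variable {V : Type*} {G : SimpleGraph V} (p : V → ZMod 2)
variable (hG : ∀ u v, G.Adj u v → p u ≠ p v)

lemma zmod2_ne_iff {x y z : ZMod 2} (h : x ≠ y) : (z = x ↔ z ≠ y) := by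
  revert x y z; decide

include hG in
lemma walk_countP_le : ∀ {a b : V} (w : G.Walk a b),
    w.support.countP (fun v => decide (p v = p a)) ≤ w.length / 2 + 1 ∧
    w.support.countP (fun v => decide (p v ≠ p a)) ≤ (w.length + 1) / 2 := by
  intro a b w
  induction w with
  | nil =>
    simp [SimpleGraph.Walk.support_nil, List.countP_cons, List.countP_nil]
  | @cons a c b h w ih =>
    have hac : p a ≠ p c := hG _ _ h
    have e1 : (fun v => decide (p v = p a)) = (fun v => decide (p v ≠ p c)) := by
      funext v
      simp only [decide_eq_decide]
      exact zmod2_ne_iff hac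
    have e2 : (fun v => decide (p v ≠ p a)) = (fun v => decide (p v = p c)) := by
      funext v
      simp only [decide_eq_decide]
      exact (zmod2_ne_iff hac.symm).symm
    rw [SimpleGraph.Walk.support_cons, SimpleGraph.Walk.length_cons]
    constructor
    · rw [List.countP_cons_of_pos (by simp), e1]
      have := ih.2
      omega
    · rw [List.countP_cons_of_neg (by simp), e2]
      have := ih.1
      omega

include hG in
lemma walk_even_iff : ∀ {a b : V} (w : G.Walk a b), (p a = p b ↔ Even w.length) := by
  intro a b w
  induction w with
  | nil => simp
  | @cons a c b h w ih =>
    have hac : p a ≠ p c := hG _ _ h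
    rw [SimpleGraph.Walk.length_cons, Nat.even_add_one, ← ih]
    constructor
    · intro hh hc
      exact hac (hh.trans hc.symm)
    · intro hh
      rcases zmod2_cases (p a) with h1 | h1 <;> rcases zmod2_cases (p b) with h2 | h2 <;>
        rcases zmod2_cases (p c) with h3 | h3 <;> simp_all

end WalkCount

lemma ham_of_evens {n : ℕ} (hn : 1 ≤ n) {u : Fin n → Bool}
    (c : (cubeGraph n).Walk u u) (hc : c.IsCycle)
    (hev : ∀ v, par v = 0 → v ∈ c.support) :
    (∀ v, v ∈ c.support) ∧ c.length = 2 ^ n := by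
  classical
  have hadj : ∀ a b : Fin n → Bool, (cubeGraph n).Adj a b → par a ≠ par b :=
    fun a b h => par_ne_of_adj h
  set ℓ := c.length with hℓ
  have htail : c.support.tail.Nodup := hc.2
  have hsupp : c.support = u :: c.support.tail := c.support_eq_cons
  have hlen : c.support.tail.length = ℓ := by
    have h1 := c.length_support
    conv at h1 => rw [hsupp]
    simp only [List.length_cons] at h1
    omega
  have hu_tail : u ∈ c.support.tail := by
    cases c with
    | nil => exact absurd rfl hc.ne_nil
    | cons h q =>
      simp only [SimpleGraph.Walk.support_cons, List.tail_cons]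
      exact q.end_mem_support
  have heven : Even ℓ := (walk_even_iff par hadj c).mp rfl
  have hcount := walk_countP_le par hadj c
  set q : (Fin n → Bool) → Bool := fun v => decide (par v = 0) with hq
  have hsplit : c.support.countP q = c.support.tail.countP q + (if q u then 1 else 0) := by
    conv_lhs => rw [hsupp]
    rw [List.countP_cons]
  have hbound : c.support.tail.countP q ≤ ℓ / 2 := by
    rcases zmod2_cases (par u) with hpu | hpu
    · have hqe : q = fun v => decide (par v = par u) := by
        funext v; rw [hpu]
      have h1 := hcount.1
      rw [← hqe] at h1
      have hqu : q u = true := by rw [hq]; simpa using hpu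
      have hone : (if q u = true then (1:ℕ) else 0) = 1 := by simp [hqu]
      rw [hone] at hsplit
      omega
    · have hqe : q = fun v => decide (par v ≠ par u) := by
        funext v
        simp only [hq, hpu, decide_eq_decide]
        exact zmod2_ne_iff (by decide)
      have h1 := hcount.2
      rw [← hqe] at h1
      have h2 : (ℓ + 1) / 2 = ℓ / 2 := by
        obtain ⟨m, hm⟩ := heven
        omega
      omega
  -- all even vertices are in the tail
  have hEsub : (Finset.univ.filter fun v : Fin n → Bool => par v = 0)
      ⊆ c.support.tail.toFinset := by
    intro v hv
    simp only [Finset.mem_filter, Finset.mem_univ, true_and] at hv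
    have := hev v hv
    rw [hsupp, List.mem_cons] at this
    rw [List.mem_toFinset]
    rcases this with h | h
    · rwa [h]
    · exact h
  have hcard1 : (2:ℕ) ^ (n-1) ≤ (c.support.tail.toFinset.filter fun v => par v = 0).card := by
    rw [← card_evens hn]
    apply Finset.card_le_card
    intro v hv
    simp only [Finset.mem_filter, Finset.mem_univ, true_and] at hv ⊢
    exact ⟨hEsub (by simp [hv]), hv⟩
  have hcard2 : (c.support.tail.toFinset.filter fun v => par v = 0).card
      = c.support.tail.countP q := by
    have hfeq : (c.support.tail.toFinset.filter fun v => par v = 0)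
        = c.support.tail.toFinset.filter (fun v => q v = true) := by
      ext v
      simp [hq]
    rw [hfeq, ← List.toFinset_filter, List.card_toFinset, (htail.filter q).dedup,
      List.countP_eq_length_filter]
  have hℓge : 2 ^ n ≤ ℓ := by
    have hpow : (2:ℕ) ^ n = 2 * 2 ^ (n-1) := by
      rw [← pow_succ']; congr 1; omega
    obtain ⟨m, hm⟩ := heven
    omega
  have hℓle : ℓ ≤ 2 ^ n := by
    have h1 := htail.length_le_card
    have h2 : Fintype.card (Fin n → Bool) = 2 ^ n := by
      simp [Fintype.card_fun]
    omega
  have hℓeq : ℓ = 2 ^ n := le_antisymm hℓle hℓge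
  have huniv : c.support.tail.toFinset = Finset.univ := by
    apply Finset.eq_univ_of_card
    rw [List.card_toFinset, htail.dedup, hlen, hℓeq]
    simp [Fintype.card_fun]
  refine ⟨fun v => ?_, hℓeq⟩
  rw [hsupp, List.mem_cons]
  right
  rw [← List.mem_toFinset, huniv]
  exact Finset.mem_univ v

/-- for 2^{n−1} ≤ k ≤ 2^n and n ≥ 2, crx_k(Q_n) = 2^n; in
particular any cycle of Q_n containing all even-weight vertices is a Hamilton cycle. -/
theorem crx_k_cube_large (n k : ℕ) (hn : 2 ≤ n) (hk1 : 2 ^ (n - 1) ≤ k)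
    (hk2 : k ≤ 2 ^ n) :
    (cubeGraph n).crx k = 2 ^ n ∧
      ∀ (u : Fin n → Bool) (c : (cubeGraph n).Walk u u), c.IsCycle →
        (∀ v : Fin n → Bool,
          (Finset.univ.filter fun i => v i = true).card % 2 = 0 → v ∈ c.support) →
        ∀ v : Fin n → Bool, v ∈ c.support := by
  classical
  have hn1 : 1 ≤ n := by omega
  have part2 : ∀ (u : Fin n → Bool) (c : (cubeGraph n).Walk u u), c.IsCycle →
      (∀ v, par v = 0 → v ∈ c.support) → (∀ v, v ∈ c.support) ∧ c.length = 2^n :=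
    fun u c hc hev => ham_of_evens hn1 c hc hev
  constructor
  · obtain ⟨u, c, hcyc, hall, hclen⟩ := ham_cycle hn
    have hedlen : c.edges.length = 2 ^ n := by rw [c.length_edges, hclen]
    set φ : Sym2 (Fin n → Bool) → ℕ :=
      fun e => if e ∈ c.edges then c.edges.idxOf e else 0 with hφ
    have hmem : ∃ φ : Sym2 (Fin n → Bool) → ℕ,
        (∀ e ∈ (cubeGraph n).edgeSet, φ e < 2 ^ n) ∧
        (cubeGraph n).IsRainbowCycleColoring k φ := by
      refine ⟨φ, ?_, ?_⟩
      · intro e _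
        rw [hφ]
        simp only
        split
        · rw [← hedlen]
          exact List.idxOf_lt_length_iff.mpr (by assumption)
        · exact Nat.pow_pos (by norm_num)
      · intro S _
        refine ⟨u, c, hcyc, fun v _ => hall v, ?_⟩
        apply List.Nodup.map_on ?_ hcyc.edges_nodup
        intro x hx y hy hxy
        rw [hφ] at hxy
        simp only [if_pos hx, if_pos hy] at hxy
        exact (List.idxOf_inj hx).mp hxy
    have hlb : ∀ r : ℕ, (∃ ψ : Sym2 (Fin n → Bool) → ℕ,
        (∀ e ∈ (cubeGraph n).edgeSet, ψ e < r) ∧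
        (cubeGraph n).IsRainbowCycleColoring k ψ) → 2 ^ n ≤ r := by
      rintro r ⟨ψ, hcol, hrb⟩
      have hEk : (Finset.univ.filter fun v : Fin n → Bool => par v = 0).card ≤ k := by
        rw [card_evens hn1]
        exact hk1
      have hkcard : k ≤ Fintype.card (Fin n → Bool) := by
        simp only [Fintype.card_fun, Fintype.card_bool, Fintype.card_fin]
        exact hk2
      obtain ⟨S, hES, hScard⟩ := Finset.exists_superset_card_eq hEk hkcard
      obtain ⟨w, c', hcyc', hSsup, hnd⟩ := hrb S hScard
      have hall' := part2 w c' hcyc'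
        (fun v hv => hSsup v (hES (Finset.mem_filter.mpr ⟨Finset.mem_univ v, hv⟩)))
      have hlen' : c'.edges.length = 2 ^ n := by rw [c'.length_edges, hall'.2]
      have hsub : (c'.edges.map ψ).toFinset ⊆ Finset.range r := by
        intro x hx
        rw [List.mem_toFinset, List.mem_map] at hx
        obtain ⟨e, he, rfl⟩ := hx
        rw [Finset.mem_range]
        exact hcol e (c'.edges_subset_edgeSet he)
      have hfin := Finset.card_le_card hsub
      rw [Finset.card_range, List.card_toFinset, hnd.dedup, List.length_map, hlen'] at hfin
      exact hfin
    rw [SimpleGraph.crx]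
    have hmemT : 2 ^ n ∈ {r : ℕ | ∃ φ : Sym2 (Fin n → Bool) → ℕ,
        (∀ e ∈ (cubeGraph n).edgeSet, φ e < r) ∧
        (cubeGraph n).IsRainbowCycleColoring k φ} := hmem
    refine le_antisymm (Nat.sInf_le hmemT) (hlb _ ?_)
    exact Nat.sInf_mem ⟨_, hmemT⟩
  · intro u c hcyc hev v
    exact (part2 u c hcyc (fun w hw => hev w ((par_eq_zero_iff w).mp hw))).1 v
end
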